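/- arXiv:2504.15885 — 8 statements merged into one kernel-verified Lean document; each statement's English description precedes it below -/
import Mathlib

section
/- Every extreme point x of the polyhedron PARTIAL-LP-MS(P,t,T) has at most m fractional jobs, i.e. the number of jobs j for which x_{j,i} ∉ {0,1} for some machine i is at most m. -/
/-- The feasible region of `PARTIAL-LP-MS(P,t,T)`, embedded in `ℝ^{n×m}` by
requiring `x j i = 0` for pairs outside `S_T = {(j,i) : p j i ≤ T}`. -/
def PartialLPMS (n m : ℕ) (p : Fin n → Fin m → ℝ) (t : Fin m → ℝ) (T : ℝ) :
    Set (Fin n → Fin m → ℝ) :=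
  {x | (∀ j i, 0 ≤ x j i) ∧
       (∀ j i, T < p j i → x j i = 0) ∧
       (∀ j, ∑ i, x j i = 1) ∧
       (∀ i, ∑ j, p j i * x j i ≤ T - t i)}

/-- Job `j` is fractional in `x` : some coordinate of row `j` is neither `0` nor `1`. -/
def FracJob {n m : ℕ} (x : Fin n → Fin m → ℝ) (j : Fin n) : Prop :=
  ∃ i, x j i ≠ 0 ∧ x j i ≠ 1

open Classical in
/-- Every extreme point of `PARTIAL-LP-MS(P,t,T)` has at most `m` fractional jobs. -/
theorem extremePoint_card_fracJobs_le
    (n m : ℕ) (p : Fin n → Fin m → ℝ) (hp : ∀ j i, 0 < p j i)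
    (t : Fin m → ℝ) (ht : ∀ i, 0 ≤ t i) (T : ℝ) (hT : 0 ≤ T)
    (x : Fin n → Fin m → ℝ)
    (hx : x ∈ Set.extremePoints ℝ (PartialLPMS n m p t T)) :
    (Finset.univ.filter (fun j => FracJob x j)).card ≤ m := by
  obtain ⟨hxA, hxext⟩ := hx
  obtain ⟨hnn, hz, hrow, hmach⟩ := hxA
  by_contra hF
  push_neg at hF
  -- the support
  set s : Finset (Fin n × Fin m) :=
    Finset.univ.filter (fun a => x a.1 a.2 ≠ 0) with hs
  have hmem : ∀ a : Fin n × Fin m, a ∈ s ↔ x a.1 a.2 ≠ 0 := by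
    intro a; simp [hs]
  -- (1) counting: the support is large
  have hcard : s.card = ∑ j : Fin n,
      (Finset.univ.filter (fun i => x j i ≠ 0)).card := by
    rw [Finset.card_eq_sum_card_fiberwise (f := Prod.fst) (t := Finset.univ)
      (fun a _ => Finset.mem_univ _)]
    refine Finset.sum_congr rfl fun j _ => ?_
    refine Finset.card_bij (fun a _ => a.2) ?_ ?_ ?_
    · intro a ha
      rw [Finset.mem_filter] at ha
      have h2 : a.1 = j := ha.2
      have h1 : x a.1 a.2 ≠ 0 := (hmem a).mp ha.1
      rw [Finset.mem_filter]
      exact ⟨Finset.mem_univ _, h2 ▸ h1⟩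
    · intro a ha b hb hab
      rw [Finset.mem_filter] at ha hb
      exact Prod.ext (ha.2.trans hb.2.symm) hab
    · intro i hi
      rw [Finset.mem_filter] at hi
      refine ⟨(j, i), ?_, rfl⟩
      rw [Finset.mem_filter]
      exact ⟨(hmem (j, i)).mpr hi.2, rfl⟩
  have hrowcard : ∀ j : Fin n,
      (if FracJob x j then 2 else 1) ≤
      (Finset.univ.filter (fun i => x j i ≠ 0)).card := by
    intro j
    have hne : (Finset.univ.filter (fun i => x j i ≠ 0)).Nonempty := by
      by_contra h
      rw [Finset.not_nonempty_iff_eq_empty, Finset.filter_eq_empty_iff] at h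
      have h0 : (∑ i, x j i) = 0 := Finset.sum_eq_zero (fun i hi => by
        have := h hi; simpa using this)
      rw [hrow j] at h0; norm_num at h0
    have h1 : 1 ≤ (Finset.univ.filter (fun i => x j i ≠ 0)).card :=
      Finset.Nonempty.card_pos hne
    split_ifs with hfr
    · obtain ⟨i0, hi0, hi1⟩ := hfr
      by_contra hle
      push_neg at hle
      have hcard1 : (Finset.univ.filter (fun i => x j i ≠ 0)).card = 1 := by omega
      obtain ⟨i1, hset⟩ := Finset.card_eq_one.mp hcard1
      have hi0mem : i0 ∈ Finset.univ.filter (fun i => x j i ≠ 0) := by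
        rw [Finset.mem_filter]; exact ⟨Finset.mem_univ _, hi0⟩
      rw [hset, Finset.mem_singleton] at hi0mem
      have hsum : ∑ i, x j i = x j i1 := by
        rw [← Finset.sum_filter_ne_zero Finset.univ, hset, Finset.sum_singleton]
      apply hi1
      rw [hi0mem, ← hsum]
      exact hrow j
    · exact h1
  have hslarge : n + m <
      Fintype.card {a : Fin n × Fin m // a ∈ s} := by
    rw [Fintype.card_coe]
    calc n + m < n + (Finset.univ.filter (fun j => FracJob x j)).card :=
          Nat.add_lt_add_left hF n
    _ = (∑ _j : Fin n, 1) +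
        ∑ j : Fin n, (if FracJob x j then 1 else 0) := by
          rw [Finset.card_filter]
          simp
    _ = ∑ j : Fin n, (1 + if FracJob x j then 1 else 0) :=
          (Finset.sum_add_distrib).symm
    _ ≤ ∑ j : Fin n, (if FracJob x j then 2 else 1) := by
          refine Finset.sum_le_sum fun j _ => ?_
          split_ifs <;> norm_num
    _ ≤ ∑ j : Fin n, (Finset.univ.filter (fun i => x j i ≠ 0)).card :=
          Finset.sum_le_sum fun j _ => hrowcard j
    _ = s.card := hcard.symm
  -- (2) linear algebra: a nontrivial kernel direction
  set M : Matrix (Fin n ⊕ Fin m) {a : Fin n × Fin m // a ∈ s} ℝ := fun r a =>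
    match r with
    | Sum.inl j => if a.1.1 = j then 1 else 0
    | Sum.inr i => if a.1.2 = i then p a.1.1 a.1.2 else 0
    with hM
  have hnotinj : ¬ Function.Injective (Matrix.mulVecLin M) := by
    intro hinj
    have hle := LinearMap.finrank_le_finrank_of_injective hinj
    rw [Module.finrank_fintype_fun_eq_card, Module.finrank_fintype_fun_eq_card] at hle
    rw [Fintype.card_sum, Fintype.card_fin, Fintype.card_fin] at hle
    omega
  rw [← LinearMap.ker_eq_bot] at hnotinj
  obtain ⟨y, hy0, hyne⟩ := Submodule.exists_mem_ne_zero_of_ne_bot hnotinj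
  have hy0' : M.mulVec y = 0 := hy0
  -- direction d
  set d : Fin n → Fin m → ℝ := fun j i => if h : (j, i) ∈ s then y ⟨(j, i), h⟩ else 0
    with hd
  have hdsupp : ∀ j i, (j, i) ∉ s → d j i = 0 := by
    intro j i h; simp [hd, h]
  have hdy : ∀ a : {a : Fin n × Fin m // a ∈ s}, d a.1.1 a.1.2 = y a := by
    intro a
    have heta : ((a.1.1 : Fin n), (a.1.2 : Fin m)) = a.1 := rfl
    simp only [hd]
    rw [dif_pos (heta ▸ a.2)]
  have hrowd : ∀ j, ∑ i, d j i = 0 := by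
    intro j
    have h0 : M.mulVec y (Sum.inl j) = 0 := by rw [hy0']; rfl
    rw [Matrix.mulVec, dotProduct] at h0
    have hstep : ∑ a : {a : Fin n × Fin m // a ∈ s}, M (Sum.inl j) a * y a
        = ∑ a ∈ s, (if a.1 = j then d a.1 a.2 else 0) := by
      rw [← Finset.sum_coe_sort s (fun a => if a.1 = j then d a.1 a.2 else 0)]
      refine Finset.sum_congr rfl fun a _ => ?_
      rw [hdy a]
      simp only [hM]
      split_ifs <;> simp
    rw [hstep] at h0
    rw [Finset.sum_subset (Finset.subset_univ s) (fun a _ ha => by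
      split_ifs
      · exact hdsupp a.1 a.2 ha
      · rfl)] at h0
    rw [Fintype.sum_prod_type] at h0
    have hsw : ∀ j' : Fin n, (∑ i : Fin m, if j' = j then d j' i else 0)
        = if j' = j then ∑ i : Fin m, d j' i else 0 := by
      intro j'; split_ifs <;> simp
    simp only [hsw, Finset.sum_ite_eq', Finset.mem_univ, if_true] at h0
    exact h0
  have hmachd : ∀ i, ∑ j, p j i * d j i = 0 := by
    intro i
    have h0 : M.mulVec y (Sum.inr i) = 0 := by rw [hy0']; rfl
    rw [Matrix.mulVec, dotProduct] at h0
    have hstep : ∑ a : {a : Fin n × Fin m // a ∈ s}, M (Sum.inr i) a * y a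
        = ∑ a ∈ s, (if a.2 = i then p a.1 a.2 * d a.1 a.2 else 0) := by
      rw [← Finset.sum_coe_sort s
        (fun a => if a.2 = i then p a.1 a.2 * d a.1 a.2 else 0)]
      refine Finset.sum_congr rfl fun a _ => ?_
      rw [hdy a]
      simp only [hM]
      split_ifs <;> simp
    rw [hstep] at h0
    rw [Finset.sum_subset (Finset.subset_univ s) (fun a _ ha => by
      split_ifs
      · rw [hdsupp a.1 a.2 ha]; ring
      · rfl)] at h0
    rw [Fintype.sum_prod_type] at h0
    simp only [Finset.sum_ite_eq', Finset.mem_univ, if_true] at h0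
    exact h0
  -- (3) epsilon
  have hsne : s.Nonempty := Finset.card_pos.mp (by
    rw [← Fintype.card_coe]; omega)
  set ε : ℝ := s.inf' hsne (fun a => x a.1 a.2 / (|d a.1 a.2| + 1)) with hε
  have hεpos : 0 < ε := by
    rw [hε, Finset.lt_inf'_iff]
    intro a ha
    have hxa : x a.1 a.2 ≠ 0 := (hmem a).mp ha
    have hxp : 0 < x a.1 a.2 := lt_of_le_of_ne (hnn a.1 a.2) (Ne.symm hxa)
    positivity
  have hkey : ∀ j i, ε * |d j i| ≤ x j i := by
    intro j i
    by_cases h : (j, i) ∈ s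
    · have h1 : ε ≤ x j i / (|d j i| + 1) :=
        Finset.inf'_le (b := (j, i)) _ h
      have h2 : (0:ℝ) < |d j i| + 1 := by positivity
      rw [le_div_iff₀ h2] at h1
      nlinarith [abs_nonneg (d j i), hεpos.le]
    · rw [hdsupp j i h]
      simp only [abs_zero, mul_zero]
      exact hnn j i
  -- (4) two feasible perturbations
  have hfeas : ∀ σ : ℝ, |σ| = 1 →
      (fun j i => x j i + σ * ε * d j i) ∈ PartialLPMS n m p t T := by
    intro σ hσ
    refine ⟨?_, ?_, ?_, ?_⟩
    · intro j i
      show 0 ≤ x j i + σ * ε * d j i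
      have h2 : |σ * ε * d j i| ≤ x j i := by
        rw [abs_mul, abs_mul, hσ, abs_of_pos hεpos, one_mul]
        exact hkey j i
      have h3 := neg_abs_le (σ * ε * d j i)
      linarith
    · intro j i hTp
      show x j i + σ * ε * d j i = 0
      have hx0 : x j i = 0 := hz j i hTp
      have hns : (j, i) ∉ s := by rw [hmem]; simpa using hx0
      rw [hx0, hdsupp j i hns]; ring
    · intro j
      show ∑ i, (x j i + σ * ε * d j i) = 1
      rw [Finset.sum_add_distrib, hrow j, ← Finset.mul_sum, hrowd j]
      ring
    · intro i
      show ∑ j, p j i * (x j i + σ * ε * d j i) ≤ T - t i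
      calc ∑ j, p j i * (x j i + σ * ε * d j i)
          = (∑ j, p j i * x j i) + σ * ε * (∑ j, p j i * d j i) := by
            rw [Finset.mul_sum, ← Finset.sum_add_distrib]
            exact Finset.sum_congr rfl fun j _ => by ring
        _ = ∑ j, p j i * x j i := by rw [hmachd i]; ring
        _ ≤ T - t i := hmach i
  have h1 := hfeas 1 (by norm_num)
  have h2 := hfeas (-1) (by norm_num)
  have hseg : x ∈ openSegment ℝ
      (fun j i => x j i + (1:ℝ) * ε * d j i)
      (fun j i => x j i + (-1:ℝ) * ε * d j i) := by
    refine ⟨1/2, 1/2, by norm_num, by norm_num, by norm_num, ?_⟩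
    funext j
    funext i
    simp only [Pi.add_apply, Pi.smul_apply, smul_eq_mul]
    ring
  have heq := hxext h1 h2 hseg
  apply hyne
  funext a
  have hxy := congrFun (congrFun heq a.1.1) a.1.2
  simp only [one_mul] at hxy
  have hed : ε * d a.1.1 a.1.2 = 0 := by linarith
  have hda : d a.1.1 a.1.2 = 0 :=
    (mul_eq_zero.mp hed).resolve_left (ne_of_gt hεpos)
  rw [Pi.zero_apply, ← hdy a]
  exact hda
end

section
/- For every extreme point x of PARTIAL-LP-MS(P,t,T) there exists an injective map σ from the set of fractional jobs of x into the set of machines such that x_{j,σ(j)} > 0 (in particular (j,σ(j)) ∈ S_T) for every fractional job j. -/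
lemma key_card_le (n m : ℕ) (p : Fin n → Fin m → ℝ) (t : Fin m → ℝ) (T : ℝ)
    (x : Fin n → Fin m → ℝ)
    (hx : x ∈ Set.extremePoints ℝ (PartialLPMS n m p t T))
    (E : Finset (Fin n × Fin m))
    (hE : ∀ e ∈ E, 0 < x e.1 e.2 ∧ x e.1 e.2 < 1) :
    E.card ≤ (E.image Prod.fst).card + (E.image Prod.snd).card := by
  classical
  by_contra hlt
  push_neg at hlt
  set J := E.image Prod.fst with hJ
  set I := E.image Prod.snd with hI
  obtain ⟨hxS, hext⟩ := hx
  obtain ⟨h0, hz, hrow, hload⟩ := hxS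
  -- incidence matrix
  let M : Matrix (↥J ⊕ ↥I) (↥E) ℝ := Matrix.of fun r e =>
    match r with
    | Sum.inl j => if (e : Fin n × Fin m).1 = (j : Fin n) then 1 else 0
    | Sum.inr i => if (e : Fin n × Fin m).2 = (i : Fin m) then
        p (e : Fin n × Fin m).1 (e : Fin n × Fin m).2 else 0
  let Φ := M.mulVecLin
  have hni : ¬ Function.Injective Φ := by
    intro hinj
    have h1 := LinearMap.finrank_le_finrank_of_injective hinj
    rw [Module.finrank_fintype_fun_eq_card, Module.finrank_fintype_fun_eq_card,
      Fintype.card_sum, Fintype.card_coe, Fintype.card_coe, Fintype.card_coe] at h1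
    omega
  obtain ⟨y1, y2, hΦeq, hne12⟩ := Function.not_injective_iff.mp hni
  set y : ↥E → ℝ := y1 - y2 with hy
  have hy0 : Φ y = 0 := by rw [hy, map_sub, hΦeq, sub_self]
  have hyne : y ≠ 0 := sub_ne_zero.mpr hne12
  let y' : Fin n × Fin m → ℝ := fun e => if h : e ∈ E then y ⟨e, h⟩ else 0
  have hy'supp : ∀ e, e ∉ E → y' e = 0 := fun e he => dif_neg he
  obtain ⟨e0, he0⟩ : ∃ e : ↥E, y e ≠ 0 := by
    by_contra h
    push_neg at h
    exact hyne (funext fun e => h e)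
  have hy'e0 : y' (e0 : Fin n × Fin m) ≠ 0 := by
    simpa [y', dif_pos e0.2] using he0
  -- sum identities
  have hrowsum : ∀ j : Fin n, ∑ i, y' (j, i) = 0 := by
    intro j
    by_cases hj : j ∈ J
    · have h1 : Φ y (Sum.inl ⟨j, hj⟩) = 0 := by rw [hy0]; rfl
      have h2 : Φ y (Sum.inl ⟨j, hj⟩)
          = ∑ e : ↥E, if (e : Fin n × Fin m).1 = j then y e else 0 := by
        simp only [Φ, Matrix.mulVecLin_apply, Matrix.mulVec, dotProduct, M, Matrix.of_apply]
        exact Finset.sum_congr rfl fun e _ => by by_cases h : (e : Fin n × Fin m).1 = j <;> simp [h]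
      have h3 : ∑ e : ↥E, (if (e : Fin n × Fin m).1 = j then y e else 0)
          = ∑ e ∈ E, (if e.1 = j then y' e else 0) := by
        rw [← Finset.sum_attach E (fun e => if e.1 = j then y' e else 0)]
        exact Finset.sum_congr rfl fun e _ => by
          simp [y', dif_pos e.2]
      have h4 : ∑ e ∈ E, (if e.1 = j then y' e else 0)
          = ∑ e : Fin n × Fin m, (if e.1 = j then y' e else 0) := by
        apply Finset.sum_subset (Finset.subset_univ E)
        intro e _ he
        simp [hy'supp e he]
      have h5 : ∑ e : Fin n × Fin m, (if e.1 = j then y' e else 0)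
          = ∑ i, y' (j, i) := by
        rw [Fintype.sum_prod_type, Finset.sum_comm]
        exact Finset.sum_congr rfl fun i _ => by simp
      rw [← h5, ← h4, ← h3, ← h2, h1]
    · apply Finset.sum_eq_zero
      intro i _
      apply hy'supp
      intro hmem
      exact hj (Finset.mem_image.mpr ⟨(j, i), hmem, rfl⟩)
  have hcolsum : ∀ i : Fin m, ∑ j, p j i * y' (j, i) = 0 := by
    intro i
    by_cases hi : i ∈ I
    · have h1 : Φ y (Sum.inr ⟨i, hi⟩) = 0 := by rw [hy0]; rfl
      have h2 : Φ y (Sum.inr ⟨i, hi⟩)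
          = ∑ e : ↥E, if (e : Fin n × Fin m).2 = i then
              p (e : Fin n × Fin m).1 (e : Fin n × Fin m).2 * y e else 0 := by
        simp only [Φ, Matrix.mulVecLin_apply, Matrix.mulVec, dotProduct, M, Matrix.of_apply]
        exact Finset.sum_congr rfl fun e _ => by by_cases h : (e : Fin n × Fin m).2 = i <;> simp [h]
      have h3 : ∑ e : ↥E, (if (e : Fin n × Fin m).2 = i then
              p (e : Fin n × Fin m).1 (e : Fin n × Fin m).2 * y e else 0)
          = ∑ e ∈ E, (if e.2 = i then p e.1 e.2 * y' e else 0) := by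
        rw [← Finset.sum_attach E (fun e => if e.2 = i then p e.1 e.2 * y' e else 0)]
        exact Finset.sum_congr rfl fun e _ => by
          simp [y', dif_pos e.2]
      have h4 : ∑ e ∈ E, (if e.2 = i then p e.1 e.2 * y' e else 0)
          = ∑ e : Fin n × Fin m, (if e.2 = i then p e.1 e.2 * y' e else 0) := by
        apply Finset.sum_subset (Finset.subset_univ E)
        intro e _ he
        simp [hy'supp e he]
      have h5 : ∑ e : Fin n × Fin m, (if e.2 = i then p e.1 e.2 * y' e else 0)
          = ∑ j, p j i * y' (j, i) := by
        rw [Fintype.sum_prod_type]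
        exact Finset.sum_congr rfl fun j _ => by simp [Finset.sum_ite_eq]
      rw [← h5, ← h4, ← h3, ← h2, h1]
    · apply Finset.sum_eq_zero
      intro j _
      have : y' (j, i) = 0 := by
        apply hy'supp
        intro hmem
        exact hi (Finset.mem_image.mpr ⟨(j, i), hmem, rfl⟩)
      rw [this, mul_zero]
  -- choose epsilon
  have hEne : E.Nonempty := ⟨e0.1, e0.2⟩
  set δ : ℝ := E.inf' hEne (fun e => x e.1 e.2) with hδdef
  have hδ : 0 < δ := by
    rw [hδdef, Finset.lt_inf'_iff]
    exact fun e he => (hE e he).1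
  set B : ℝ := E.sup' hEne (fun e => |y' e|) with hBdef
  have hB0 : 0 ≤ B := le_trans (abs_nonneg (y' e0.1)) (Finset.le_sup' (fun e => |y' e|) e0.2)
  set ε : ℝ := δ / (B + 1) with hεdef
  have hε : 0 < ε := div_pos hδ (by linarith)
  have hbound : ∀ e ∈ E, ε * |y' e| ≤ x e.1 e.2 := by
    intro e he
    have h1 : |y' e| ≤ B := by rw [hBdef]; exact Finset.le_sup' (fun e => |y' e|) he
    have h2 : ε * |y' e| ≤ ε * B := by
      apply mul_le_mul_of_nonneg_left h1 hε.le
    have h3 : ε * B < δ := by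
      rw [hεdef, div_mul_eq_mul_div, div_lt_iff₀ (by linarith : (0:ℝ) < B + 1)]
      nlinarith
    have h4 : δ ≤ x e.1 e.2 := Finset.inf'_le _ he
    linarith
  set z : Fin n → Fin m → ℝ := fun j i => ε * y' (j, i) with hzdef
  have hzb : ∀ j i, |z j i| ≤ x j i := by
    intro j i
    by_cases hji : (j, i) ∈ E
    · have := hbound (j, i) hji
      simpa [hzdef, abs_mul, abs_of_pos hε] using this
    · simp [hzdef, hy'supp _ hji, h0 j i]
  have hzrow : ∀ j, ∑ i, z j i = 0 := by
    intro j
    simp only [hzdef, ← Finset.mul_sum, hrowsum j, mul_zero]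
  have hzcol : ∀ i, ∑ j, p j i * z j i = 0 := by
    intro i
    have : ∑ j, p j i * z j i = ε * ∑ j, p j i * y' (j, i) := by
      rw [Finset.mul_sum]
      exact Finset.sum_congr rfl fun j _ => by ring
    rw [this, hcolsum i, mul_zero]
  -- feasibility of x ± z
  have hmem : ∀ s : ℝ, |s| ≤ 1 → (fun j i => x j i + s * z j i) ∈ PartialLPMS n m p t T := by
    intro s hs
    have hsz : ∀ j i, |s * z j i| ≤ x j i := by
      intro j i
      rw [abs_mul]
      calc |s| * |z j i| ≤ 1 * |z j i| := by
            apply mul_le_mul_of_nonneg_right hs (abs_nonneg _)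
        _ = |z j i| := one_mul _
        _ ≤ x j i := hzb j i
    refine ⟨?_, ?_, ?_, ?_⟩
    · intro j i
      show 0 ≤ x j i + s * z j i
      have := hsz j i
      have := neg_abs_le (s * z j i)
      linarith
    · intro j i hpT
      show x j i + s * z j i = 0
      have hx0 := hz j i hpT
      have h1 := hsz j i
      rw [hx0] at h1 ⊢
      have : s * z j i = 0 := by
        have := abs_nonneg (s * z j i)
        have h2 : |s * z j i| = 0 := le_antisymm h1 this
        exact abs_eq_zero.mp h2
      rw [this, add_zero]
    · intro j
      show ∑ i, (x j i + s * z j i) = 1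
      rw [Finset.sum_add_distrib, hrow j, ← Finset.mul_sum, hzrow j, mul_zero, add_zero]
    · intro i
      show ∑ j, p j i * (x j i + s * z j i) ≤ T - t i
      have heq : ∑ j, p j i * (x j i + s * z j i)
          = (∑ j, p j i * x j i) + s * ∑ j, p j i * z j i := by
        rw [Finset.mul_sum, ← Finset.sum_add_distrib]
        exact Finset.sum_congr rfl fun j _ => by ring
      rw [heq, hzcol i, mul_zero, add_zero]
      exact hload i
  have hplus : x + z ∈ PartialLPMS n m p t T := by
    have := hmem 1 (by norm_num)
    convert this using 1
    funext j; funext i; simp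
  have hminus : x - z ∈ PartialLPMS n m p t T := by
    have := hmem (-1) (by norm_num)
    convert this using 1
    funext j; funext i; simp [sub_eq_add_neg]
  have hopen : x ∈ openSegment ℝ (x - z) (x + z) := by
    refine ⟨1/2, 1/2, by norm_num, by norm_num, by norm_num, ?_⟩
    funext j
    funext i
    simp only [Pi.add_apply, Pi.sub_apply, Pi.smul_apply, smul_eq_mul]
    ring
  have hzz : x - z = x := hext hminus hplus hopen
  have : z e0.1.1 e0.1.2 = 0 := by
    have h := congrFun (congrFun hzz e0.1.1) e0.1.2
    simp only [Pi.sub_apply] at h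
    linarith
  rw [hzdef] at this
  simp only at this
  rcases mul_eq_zero.mp this with h | h
  · exact absurd h hε.ne'
  · exact hy'e0 (by simpa using h)

/-- For every extreme point `x` of `PARTIAL-LP-MS(P,t,T)` there is an injective map `σ`
from the fractional jobs of `x` to the machines with `x j (σ j) > 0` for every
fractional job `j` (in particular `(j, σ j) ∈ S_T`, since `x` vanishes outside `S_T`). -/
theorem extremePoint_exists_injective_matching
    (n m : ℕ) (p : Fin n → Fin m → ℝ) (hp : ∀ j i, 0 < p j i)
    (t : Fin m → ℝ) (ht : ∀ i, 0 ≤ t i) (T : ℝ) (hT : 0 ≤ T)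
    (x : Fin n → Fin m → ℝ)
    (hx : x ∈ Set.extremePoints ℝ (PartialLPMS n m p t T)) :
    ∃ σ : Fin n → Fin m,
      Set.InjOn σ {j | FracJob x j} ∧ ∀ j, FracJob x j → 0 < x j (σ j) := by
  classical
  obtain ⟨h0, hzz, hrow, hload⟩ := hx.1
  have hle1 : ∀ j i, x j i ≤ 1 := by
    intro j i
    have h1 : x j i ≤ ∑ i', x j i' :=
      Finset.single_le_sum (fun i' _ => h0 j i') (Finset.mem_univ i)
    rw [hrow j] at h1
    exact h1
  have hfrac : ∀ j, FracJob x j →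
      ∃ i i', i ≠ i' ∧ (0 < x j i ∧ x j i < 1) ∧ (0 < x j i' ∧ x j i' < 1) := by
    intro j hf
    obtain ⟨i, hi0, hi1⟩ := hf
    have hipos : 0 < x j i := lt_of_le_of_ne (h0 j i) (Ne.symm hi0)
    have hilt : x j i < 1 := lt_of_le_of_ne (hle1 j i) hi1
    have hsum : x j i + ∑ i' ∈ Finset.univ.erase i, x j i' = 1 := by
      rw [Finset.add_sum_erase _ _ (Finset.mem_univ i)]
      exact hrow j
    have hpos' : ∃ i' ∈ Finset.univ.erase i, 0 < x j i' := by
      by_contra h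
      push_neg at h
      have : ∑ i' ∈ Finset.univ.erase i, x j i' ≤ 0 := Finset.sum_nonpos h
      linarith
    obtain ⟨i', hi'mem, hi'pos⟩ := hpos'
    have hne : i' ≠ i := (Finset.mem_erase.mp hi'mem).1
    have hle : x j i' ≤ ∑ i'' ∈ Finset.univ.erase i, x j i'' :=
      Finset.single_le_sum (fun i'' _ => h0 j i'') hi'mem
    have hi'lt : x j i' < 1 := by linarith
    exact ⟨i, i', hne.symm, ⟨hipos, hilt⟩, ⟨hi'pos, hi'lt⟩⟩
  choose i1 i2 hne12 hfst hsnd using hfrac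
  let R : {j : Fin n // FracJob x j} → Finset (Fin m) := fun j =>
    Finset.univ.filter (fun i => 0 < x j.1 i ∧ x j.1 i < 1)
  have hall : ∀ s : Finset {j : Fin n // FracJob x j}, s.card ≤ (s.biUnion R).card := by
    intro s
    set E : Finset (Fin n × Fin m) := Finset.univ.filter (fun e =>
      (∃ h : FracJob x e.1, (⟨e.1, h⟩ : {j : Fin n // FracJob x j}) ∈ s) ∧
        0 < x e.1 e.2 ∧ x e.1 e.2 < 1) with hEdef
    have hkey := key_card_le n m p t T x hx E
      (fun e he => ((Finset.mem_filter.mp he).2).2)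
    have hJle : (E.image Prod.fst).card ≤ s.card := by
      have hsub : E.image Prod.fst ⊆ s.image Subtype.val := by
        intro j hj
        obtain ⟨e, he, rfl⟩ := Finset.mem_image.mp hj
        obtain ⟨⟨h, hmem⟩, -⟩ := (Finset.mem_filter.mp he).2
        exact Finset.mem_image.mpr ⟨⟨e.1, h⟩, hmem, rfl⟩
      exact le_trans (Finset.card_le_card hsub) Finset.card_image_le
    have hIle : (E.image Prod.snd).card ≤ (s.biUnion R).card := by
      apply Finset.card_le_card
      intro i hi
      obtain ⟨e, he, rfl⟩ := Finset.mem_image.mp hi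
      obtain ⟨⟨h, hmem⟩, hfr⟩ := (Finset.mem_filter.mp he).2
      exact Finset.mem_biUnion.mpr ⟨⟨e.1, h⟩, hmem,
        Finset.mem_filter.mpr ⟨Finset.mem_univ _, hfr⟩⟩
    have h2s : 2 * s.card ≤ E.card := by
      set E1 : Finset (Fin n × Fin m) := s.image (fun j => (j.1, i1 j.1 j.2)) with hE1
      set E2 : Finset (Fin n × Fin m) := s.image (fun j => (j.1, i2 j.1 j.2)) with hE2
      have hcard1 : E1.card = s.card := by
        apply Finset.card_image_of_injective
        intro a b hab
        exact Subtype.ext (congrArg Prod.fst hab)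
      have hcard2 : E2.card = s.card := by
        apply Finset.card_image_of_injective
        intro a b hab
        exact Subtype.ext (congrArg Prod.fst hab)
      have hsub1 : E1 ⊆ E := by
        intro e he
        obtain ⟨j, hj, rfl⟩ := Finset.mem_image.mp he
        refine Finset.mem_filter.mpr ⟨Finset.mem_univ _, ⟨j.2, by simpa using hj⟩, ?_⟩
        exact hfst j.1 j.2
      have hsub2 : E2 ⊆ E := by
        intro e he
        obtain ⟨j, hj, rfl⟩ := Finset.mem_image.mp he
        refine Finset.mem_filter.mpr ⟨Finset.mem_univ _, ⟨j.2, by simpa using hj⟩, ?_⟩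
        exact hsnd j.1 j.2
      have hdisj : Disjoint E1 E2 := by
        rw [Finset.disjoint_left]
        intro e he1 he2
        obtain ⟨a, ha, hae⟩ := Finset.mem_image.mp he1
        obtain ⟨b, hb, hbe⟩ := Finset.mem_image.mp he2
        have hab : a = b := Subtype.ext (by
          have := congrArg Prod.fst (hae.trans hbe.symm)
          simpa using this)
        subst hab
        have : i1 a.1 a.2 = i2 a.1 a.2 := by
          have := congrArg Prod.snd (hae.trans hbe.symm)
          simpa using this
        exact hne12 a.1 a.2 this
      have hunion : (E1 ∪ E2).card = E1.card + E2.card := Finset.card_union_of_disjoint hdisj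
      have : E1 ∪ E2 ⊆ E := Finset.union_subset hsub1 hsub2
      have := Finset.card_le_card this
      omega
    omega
  obtain ⟨f, hfinj, hfmem⟩ := (Finset.all_card_le_biUnion_card_iff_exists_injective R).mp hall
  rcases Nat.eq_zero_or_pos n with hn | hn
  · subst hn
    exact ⟨fun j => j.elim0, fun a ha => a.elim0, fun j => j.elim0⟩
  · have hm : 0 < m := by
      rcases Nat.eq_zero_or_pos m with hm0 | hm
      · exfalso
        have := hrow ⟨0, hn⟩
        subst hm0
        simp at this
      · exact hm
    refine ⟨fun j => if h : FracJob x j then f ⟨j, h⟩ else ⟨0, hm⟩, ?_, ?_⟩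
    · intro a ha b hb hab
      simp only [Set.mem_setOf_eq] at ha hb
      simp only [dif_pos ha, dif_pos hb] at hab
      exact congrArg Subtype.val (hfinj hab)
    · intro j hj
      simp only [dif_pos hj]
      have := hfmem ⟨j, hj⟩
      have := (Finset.mem_filter.mp this).2
      exact this.1
end

section
/- In the uniform machine scheduling setting, let T' be the smallest natural number T for which PARTIAL-LP-MS(P,t,T) is nonempty, and let x be a feasible point of PARTIAL-LP-MS(P,t,T'). Then x is an extreme point of PARTIAL-LP-MS(P,t,T') if and only if both of the following hold: (i) the bipartite graph G(x) is a forest (contains no cycle), and (ii) every connected component of G(x) contains at most one machine-node i whose completion time t_i + Σ_{j:(j,i)∈S_{T'}} p_{j,i} x_{j,i} is strictly smaller than T'. -/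
/-- The bipartite graph on jobs ⊕ machines whose edges are the pairs `(j,i)`
satisfying the relation `E`. -/
def bipartiteGraph (n m : ℕ) (E : Fin n → Fin m → Prop) :
    SimpleGraph (Fin n ⊕ Fin m) where
  Adj a b :=
    (∃ j i, a = Sum.inl j ∧ b = Sum.inr i ∧ E j i) ∨
    (∃ j i, a = Sum.inr i ∧ b = Sum.inl j ∧ E j i)
  symm := by
    constructor
    rintro a b (⟨j, i, rfl, rfl, h⟩ | ⟨j, i, rfl, rfl, h⟩)
    · exact Or.inr ⟨j, i, rfl, rfl, h⟩
    · exact Or.inl ⟨j, i, rfl, rfl, h⟩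
  loopless := by
    constructor
    rintro a (⟨j, i, rfl, h, -⟩ | ⟨j, i, rfl, h, -⟩) <;> simp at h

/-- The graph `G(x)` : job `j` and machine `i` are adjacent iff `(j,i) ∈ S_T` and
`0 < x j i < 1`. -/
def fracGraph (n m : ℕ) (p : Fin n → Fin m → ℝ) (T : ℝ)
    (x : Fin n → Fin m → ℝ) : SimpleGraph (Fin n ⊕ Fin m) :=
  bipartiteGraph n m (fun j i => p j i ≤ T ∧ 0 < x j i ∧ x j i < 1)

namespace ExtremeAux

open SimpleGraph Sum

variable {V : Type*} [DecidableEq V]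

lemma dart_count_sub {G : SimpleGraph V} {a b : V} (w : G.Walk a b) (v : V) :
    ((w.darts.filter (fun e => e.toProd.1 = v)).length : ℝ)
      - ((w.darts.filter (fun e => e.toProd.2 = v)).length : ℝ)
    = (if v = a then 1 else 0) - (if v = b then 1 else 0) := by
  induction w with
  | nil => simp
  | @cons u u' b h p ih =>
    have L1 : ((List.filter (fun e => decide (e.toProd.1 = v))
          ((Walk.cons h p).darts)).length : ℝ)
        = (if v = u then 1 else 0)
          + ((p.darts.filter (fun e => decide (e.toProd.1 = v))).length : ℝ) := by
      rw [Walk.darts_cons, List.filter_cons]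
      by_cases hh : u = v
      · simp [hh, add_comm]
      · simp [hh]; exact fun hc => hh hc.symm
    have L2 : ((List.filter (fun e => decide (e.toProd.2 = v))
          ((Walk.cons h p).darts)).length : ℝ)
        = (if v = u' then 1 else 0)
          + ((p.darts.filter (fun e => decide (e.toProd.2 = v))).length : ℝ) := by
      rw [Walk.darts_cons, List.filter_cons]
      by_cases hh : u' = v
      · simp [hh, add_comm]
      · simp [hh]; exact fun hc => hh hc.symm
    rw [L1, L2]
    have := ih
    split_ifs at this ⊢ <;> linarith


lemma bg_adj {n m : ℕ} {E : Fin n → Fin m → Prop} {a b : Fin n ⊕ Fin m} :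
    (bipartiteGraph n m E).Adj a b ↔
      (∃ j i, a = inl j ∧ b = inr i ∧ E j i) ∨
      (∃ j i, a = inr i ∧ b = inl j ∧ E j i) := Iff.rfl

lemma sum_filter_len {α β : Type*} [Fintype β] (l : List α) (f : α → β → Bool) (P : α → Bool)
    (h : ∀ a ∈ l, (∑ b, if f a b then (1:ℝ) else 0) = if P a then 1 else 0) :
    (∑ b, ((l.filter (f · b)).length : ℝ)) = ((l.filter P).length : ℝ) := by
  induction l with
  | nil => simp
  | cons a l ih =>
    simp only [List.filter_cons]
    have hsum : (∑ b, (((if f a b then a :: l.filter (f · b) else l.filter (f · b))).length : ℝ))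
        = ∑ b, ((if f a b then (1:ℝ) else 0) + ((l.filter (f · b)).length : ℝ)) := by
      apply Finset.sum_congr rfl; intro b _
      split_ifs <;> simp <;> ring
    rw [hsum, Finset.sum_add_distrib, h a List.mem_cons_self,
      ih (fun a' ha' => h a' (List.mem_cons_of_mem _ ha'))]
    split_ifs <;> simp <;> ring

/-- net flow of a dart list on the (job j, machine i) edge -/
noncomputable def netR {n m : ℕ} {E : Fin n → Fin m → Prop}
    (l : List (bipartiteGraph n m E).Dart) (j : Fin n) (i : Fin m) : ℝ :=
  ((l.filter (fun e => e.toProd.1 = inl j ∧ e.toProd.2 = inr i)).length : ℝ)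
    - ((l.filter (fun e => e.toProd.1 = inr i ∧ e.toProd.2 = inl j)).length : ℝ)

variable {n m : ℕ} {E : Fin n → Fin m → Prop} {a b : Fin n ⊕ Fin m}

lemma row_sum (w : (bipartiteGraph n m E).Walk a b) (j : Fin n) :
    ∑ i, netR w.darts j i
      = (if (inl j : Fin n ⊕ Fin m) = a then 1 else 0)
        - (if (inl j : Fin n ⊕ Fin m) = b then 1 else 0) := by
  unfold netR
  rw [Finset.sum_sub_distrib]
  have h1 : (∑ i, ((w.darts.filter (fun e => e.toProd.1 = inl j ∧ e.toProd.2 = inr i)).length : ℝ))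
      = ((w.darts.filter (fun e => e.toProd.1 = inl j)).length : ℝ) := by
    apply sum_filter_len
    intro e he
    by_cases hf : e.toProd.1 = inl j
    · rcases bg_adj.mp e.adj with ⟨j', i', h1', h2', -⟩ | ⟨j', i', h1', h2', -⟩
      · rw [if_pos (decide_eq_true hf)]
        calc ∑ i, (if decide (e.toProd.1 = inl j ∧ e.toProd.2 = inr i) = true then (1:ℝ) else 0)
            = ∑ i, (if i' = i then (1:ℝ) else 0) :=
              Finset.sum_congr rfl (fun i _ => by simp [hf, h2'])
          _ = 1 := by simp
      · rw [hf] at h1'; simp at h1'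
    · rw [if_neg (by simpa using hf)]
      apply Finset.sum_eq_zero; intro i _; simp [hf]
  have h2 : (∑ i, ((w.darts.filter (fun e => e.toProd.1 = inr i ∧ e.toProd.2 = inl j)).length : ℝ))
      = ((w.darts.filter (fun e => e.toProd.2 = inl j)).length : ℝ) := by
    apply sum_filter_len
    intro e he
    by_cases hf : e.toProd.2 = inl j
    · rcases bg_adj.mp e.adj with ⟨j', i', h1', h2', -⟩ | ⟨j', i', h1', h2', -⟩
      · rw [hf] at h2'; simp at h2'
      · rw [if_pos (decide_eq_true hf)]
        calc ∑ i, (if decide (e.toProd.1 = inr i ∧ e.toProd.2 = inl j) = true then (1:ℝ) else 0)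
            = ∑ i, (if i' = i then (1:ℝ) else 0) :=
              Finset.sum_congr rfl (fun i _ => by simp [hf, h1'])
          _ = 1 := by simp
    · rw [if_neg (by simpa using hf)]
      apply Finset.sum_eq_zero; intro i _; simp [hf]
  rw [h1, h2, dart_count_sub w (inl j)]

lemma col_sum (w : (bipartiteGraph n m E).Walk a b) (i : Fin m) :
    ∑ j, netR w.darts j i
      = (if (inr i : Fin n ⊕ Fin m) = b then 1 else 0)
        - (if (inr i : Fin n ⊕ Fin m) = a then 1 else 0) := by
  unfold netR
  rw [Finset.sum_sub_distrib]
  have h1 : (∑ j, ((w.darts.filter (fun e => e.toProd.1 = inl j ∧ e.toProd.2 = inr i)).length : ℝ))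
      = ((w.darts.filter (fun e => e.toProd.2 = inr i)).length : ℝ) := by
    apply sum_filter_len
    intro e he
    by_cases hf : e.toProd.2 = inr i
    · rcases bg_adj.mp e.adj with ⟨j', i', h1', h2', -⟩ | ⟨j', i', h1', h2', -⟩
      · rw [if_pos (decide_eq_true hf)]
        calc ∑ j, (if decide (e.toProd.1 = inl j ∧ e.toProd.2 = inr i) = true then (1:ℝ) else 0)
            = ∑ j, (if j' = j then (1:ℝ) else 0) :=
              Finset.sum_congr rfl (fun j _ => by simp [hf, h1'])
          _ = 1 := by simp
      · rw [hf] at h2'; simp at h2'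
    · rw [if_neg (by simpa using hf)]
      apply Finset.sum_eq_zero; intro j _; simp [hf]
  have h2 : (∑ j, ((w.darts.filter (fun e => e.toProd.1 = inr i ∧ e.toProd.2 = inl j)).length : ℝ))
      = ((w.darts.filter (fun e => e.toProd.1 = inr i)).length : ℝ) := by
    apply sum_filter_len
    intro e he
    by_cases hf : e.toProd.1 = inr i
    · rcases bg_adj.mp e.adj with ⟨j', i', h1', h2', -⟩ | ⟨j', i', h1', h2', -⟩
      · rw [hf] at h1'; simp at h1'
      · rw [if_pos (decide_eq_true hf)]
        calc ∑ j, (if decide (e.toProd.1 = inr i ∧ e.toProd.2 = inl j) = true then (1:ℝ) else 0)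
            = ∑ j, (if j' = j then (1:ℝ) else 0) :=
              Finset.sum_congr rfl (fun j _ => by simp [hf, h2'])
          _ = 1 := by simp
    · rw [if_neg (by simpa using hf)]
      apply Finset.sum_eq_zero; intro j _; simp [hf]
  rw [h1, h2]
  have key := dart_count_sub w (inr i)
  linarith [key]


lemma netR_support {l : List (bipartiteGraph n m E).Dart} {j : Fin n} {i : Fin m}
    (h : netR l j i ≠ 0) : E j i := by
  by_contra hE
  apply h
  unfold netR
  have e1 : l.filter (fun e => e.toProd.1 = inl j ∧ e.toProd.2 = inr i) = [] := by
    rw [List.filter_eq_nil_iff]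
    rintro e he hee
    simp only [decide_eq_true_eq] at hee
    rcases bg_adj.mp e.adj with ⟨j', i', h1', h2', hE'⟩ | ⟨j', i', h1', h2', hE'⟩
    · rw [h1'] at hee; rw [h2'] at hee
      obtain ⟨hj, hi⟩ := hee
      rw [inl.injEq] at hj; rw [inr.injEq] at hi
      exact hE (hj ▸ hi ▸ hE')
    · rw [h1'] at hee; simp at hee
  have e2 : l.filter (fun e => e.toProd.1 = inr i ∧ e.toProd.2 = inl j) = [] := by
    rw [List.filter_eq_nil_iff]
    rintro e he hee
    simp only [decide_eq_true_eq] at hee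
    rcases bg_adj.mp e.adj with ⟨j', i', h1', h2', hE'⟩ | ⟨j', i', h1', h2', hE'⟩
    · rw [h1'] at hee; simp at hee
    · rw [h1'] at hee; rw [h2'] at hee
      obtain ⟨hi, hj⟩ := hee
      rw [inl.injEq] at hj; rw [inr.injEq] at hi
      exact hE (hj ▸ hi ▸ hE')
  rw [e1, e2]; simp

lemma netR_of_mem_nodup {l : List (bipartiteGraph n m E).Dart}
    (hn : (l.map SimpleGraph.Dart.edge).Nodup) {e : (bipartiteGraph n m E).Dart}
    (he : e ∈ l) {j : Fin n} {i : Fin m} :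
    (e.toProd = (inl j, inr i) → netR l j i = 1) ∧
    (e.toProd = (inr i, inl j) → netR l j i = -1) := by
  have hinj := List.inj_on_of_nodup_map hn
  have hlnd : l.Nodup := hn.of_map _
  have key : ∀ (v w : Fin n ⊕ Fin m), e.toProd = (v, w) →
      (l.filter (fun f => f.toProd.1 = v ∧ f.toProd.2 = w)).length = 1 ∧
      (l.filter (fun f => f.toProd.1 = w ∧ f.toProd.2 = v)).length = 0 := by
    intro v w hvw
    have hadj : (bipartiteGraph n m E).Adj v w := by
      have := e.adj; rwa [hvw] at this
    have hvne : v ≠ w := hadj.ne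
    constructor
    · have : l.filter (fun f => f.toProd.1 = v ∧ f.toProd.2 = w) = l.filter (· = e) := by
        apply List.filter_congr
        intro f hf
        simp only [decide_eq_true_eq, decide_eq_decide]
        constructor
        · rintro ⟨hf1, hf2⟩
          apply hinj hf he
          simp only [SimpleGraph.Dart.edge]
          rw [hvw]
          have : f.toProd = (v, w) := Prod.ext hf1 hf2
          rw [this]
        · rintro rfl; rw [hvw]; exact ⟨rfl, rfl⟩
      rw [this]
      have hcnt : List.count e l = 1 := List.count_eq_one_of_mem hlnd he
      rw [← List.countP_eq_length_filter]
      rw [← hcnt, List.count]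
      apply List.countP_congr
      intro a _
      simp [beq_iff_eq]
    · rw [List.length_eq_zero_iff, List.filter_eq_nil_iff]
      rintro f hf hff
      simp only [decide_eq_true_eq] at hff
      have hfp : f.toProd = (w, v) := Prod.ext hff.1 hff.2
      have : f = e := by
        apply hinj hf he
        simp only [SimpleGraph.Dart.edge]
        rw [hvw, hfp, Sym2.eq_swap]
      rw [this, hvw] at hfp
      exact hvne (Prod.ext_iff.mp hfp).1
  constructor
  · intro hvw
    obtain ⟨c1, c2⟩ := key _ _ hvw
    unfold netR; rw [c1, c2]; norm_num
  · intro hvw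
    obtain ⟨c1, c2⟩ := key _ _ hvw
    unfold netR; rw [c1, c2]; norm_num


/-- If there is a nonzero feasible perturbation direction, `x` is not extreme. -/
lemma not_extreme_of_direction {n m : ℕ} (p : Fin n → Fin m → ℝ) (t : Fin m → ℝ) (T : ℝ)
    {x : Fin n → Fin m → ℝ} (hx : x ∈ PartialLPMS n m p t T)
    (d : Fin n → Fin m → ℝ)
    (hsup : ∀ j i, d j i ≠ 0 → (p j i ≤ T ∧ 0 < x j i))
    (hrow : ∀ j, ∑ i, d j i = 0)
    (hcol : ∀ i, (∑ j, p j i * d j i) ≠ 0 → ∑ j, p j i * x j i < T - t i)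
    (hne : d ≠ 0) :
    x ∉ Set.extremePoints ℝ (PartialLPMS n m p t T) := by
  obtain ⟨hx0, hxS, hxrow, hxcol⟩ := hx
  classical
  -- choose ε > 0 small enough
  set F : Fin n × Fin m → ℝ := fun q =>
    if d q.1 q.2 = 0 then 1 else x q.1 q.2 / |d q.1 q.2| with hF
  set Gf : Fin m → ℝ := fun i =>
    if (∑ j, p j i * d j i) = 0 then 1
    else (T - t i - ∑ j, p j i * x j i) / |∑ j, p j i * d j i| with hGf
  set S : Finset ℝ := insert 1 (Finset.univ.image F ∪ Finset.univ.image Gf) with hS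
  have hSne : S.Nonempty := ⟨1, by simp [hS]⟩
  set ε : ℝ := S.min' hSne with hε
  have hpos : 0 < ε := by
    rw [hε, Finset.lt_min'_iff]
    intro y hy
    rw [hS] at hy
    rcases Finset.mem_insert.mp hy with rfl | hy
    · norm_num
    rcases Finset.mem_union.mp hy with hy | hy
    · obtain ⟨q, -, rfl⟩ := Finset.mem_image.mp hy
      rw [hF]
      by_cases hd : d q.1 q.2 = 0
      · simp [hd]
      · simp only [hd, if_false]
        exact div_pos (hsup q.1 q.2 hd).2 (abs_pos.mpr hd)
    · obtain ⟨i, -, rfl⟩ := Finset.mem_image.mp hy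
      rw [hGf]
      by_cases hd : (∑ j, p j i * d j i) = 0
      · simp [hd]
      · simp only [hd, if_false]
        apply div_pos _ (abs_pos.mpr hd)
        linarith [hcol i hd]
  have hεF : ∀ j i, d j i ≠ 0 → ε * |d j i| ≤ x j i := by
    intro j i hd
    have hmem : F (j, i) ∈ S := by
      rw [hS]; exact Finset.mem_insert_of_mem (Finset.mem_union_left _
        (Finset.mem_image_of_mem _ (Finset.mem_univ _)))
    have hle : ε ≤ F (j, i) := Finset.min'_le _ _ hmem
    rw [hF] at hle
    simp only [hd, if_false] at hle
    rw [div_eq_mul_inv] at hle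
    have habs : (0:ℝ) < |d j i| := abs_pos.mpr hd
    calc ε * |d j i| ≤ (x j i * |d j i|⁻¹) * |d j i| := by
          apply mul_le_mul_of_nonneg_right hle habs.le
      _ = x j i := by field_simp
  have hεG : ∀ i, (∑ j, p j i * d j i) ≠ 0 →
      ε * |∑ j, p j i * d j i| ≤ T - t i - ∑ j, p j i * x j i := by
    intro i hd
    have hmem : Gf i ∈ S := by
      rw [hS]; exact Finset.mem_insert_of_mem (Finset.mem_union_right _
        (Finset.mem_image_of_mem _ (Finset.mem_univ _)))
    have hle : ε ≤ Gf i := Finset.min'_le _ _ hmem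
    rw [hGf] at hle
    simp only [hd, if_false] at hle
    rw [div_eq_mul_inv] at hle
    have habs : (0:ℝ) < |∑ j, p j i * d j i| := abs_pos.mpr hd
    calc ε * |∑ j, p j i * d j i|
        ≤ ((T - t i - ∑ j, p j i * x j i) * |∑ j, p j i * d j i|⁻¹) * |∑ j, p j i * d j i| := by
          apply mul_le_mul_of_nonneg_right hle habs.le
      _ = T - t i - ∑ j, p j i * x j i := by field_simp
  -- both perturbations are feasible
  have hfeas : ∀ σ : ℝ, |σ| = 1 → (fun j i => x j i + σ * ε * d j i) ∈ PartialLPMS n m p t T := by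
    intro σ hσ
    refine ⟨?_, ?_, ?_, ?_⟩
    · intro j i
      by_cases hd : d j i = 0
      · simp [hd, hx0 j i]
      · have h1 : σ * ε * d j i ≥ -(ε * |d j i|) := by
          have : |σ * ε * d j i| = ε * |d j i| := by
            rw [abs_mul, abs_mul, hσ, abs_of_pos hpos]; ring
          linarith [neg_abs_le (σ * ε * d j i), this.le]
        have := hεF j i hd
        show (0:ℝ) ≤ x j i + σ * ε * d j i
        linarith
    · intro j i hT
      have hd : d j i = 0 := by
        by_contra hd
        exact absurd (hsup j i hd).1 (not_le.mpr hT)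
      show x j i + σ * ε * d j i = 0
      simp [hd, hxS j i hT]
    · intro j
      have : ∑ i, (x j i + σ * ε * d j i) = (∑ i, x j i) + σ * ε * (∑ i, d j i) := by
        rw [Finset.mul_sum, ← Finset.sum_add_distrib]
      rw [this, hxrow j, hrow j]; ring
    · intro i
      have hsplit : ∑ j, p j i * (x j i + σ * ε * d j i)
          = (∑ j, p j i * x j i) + σ * ε * (∑ j, p j i * d j i) := by
        rw [Finset.mul_sum, ← Finset.sum_add_distrib]
        apply Finset.sum_congr rfl; intro j _; ring
      show ∑ j, p j i * (x j i + σ * ε * d j i) ≤ T - t i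
      rw [hsplit]
      by_cases hd : (∑ j, p j i * d j i) = 0
      · rw [hd]; simpa using hxcol i
      · have h1 : σ * ε * (∑ j, p j i * d j i) ≤ ε * |∑ j, p j i * d j i| := by
          have : |σ * ε * (∑ j, p j i * d j i)| = ε * |∑ j, p j i * d j i| := by
            rw [abs_mul, abs_mul, hσ, abs_of_pos hpos]; ring
          linarith [le_abs_self (σ * ε * (∑ j, p j i * d j i))]
        have := hεG i hd
        linarith
  intro hext
  rw [mem_extremePoints] at hext
  obtain ⟨-, hkey⟩ := hext
  have h1 := hfeas 1 (by norm_num)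
  have h2 := hfeas (-1) (by norm_num)
  have hseg : x ∈ openSegment ℝ (fun j i => x j i + 1 * ε * d j i)
      (fun j i => x j i + (-1) * ε * d j i) := by
    refine ⟨1/2, 1/2, by norm_num, by norm_num, by norm_num, ?_⟩
    funext j i
    simp only [Pi.add_apply, Pi.smul_apply, smul_eq_mul]
    ring
  obtain ⟨heq, -⟩ := hkey _ h1 _ h2 hseg
  apply hne
  funext j i
  have := congrFun (congrFun heq j) i
  have hd : 1 * ε * d j i = 0 := by linarith [this]
  simpa using (mul_eq_zero.mp (by linarith : ε * d j i = 0)).resolve_left (ne_of_gt hpos)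

lemma netR_exists_ne {l : List (bipartiteGraph n m E).Dart}
    (hn : (l.map SimpleGraph.Dart.edge).Nodup) (hl : l ≠ []) :
    ∃ j i, netR l j i ≠ 0 := by
  have he : l.head hl ∈ l := List.head_mem hl
  set e := l.head hl with hee
  rcases bg_adj.mp e.adj with ⟨j, i, h1, h2, -⟩ | ⟨j, i, h1, h2, -⟩
  · refine ⟨j, i, ?_⟩
    rw [(netR_of_mem_nodup hn he).1 (Prod.ext h1 h2)]
    norm_num
  · refine ⟨j, i, ?_⟩
    rw [(netR_of_mem_nodup hn he).2 (Prod.ext h1 h2)]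
    norm_num


/-- Forward direction: extreme point implies acyclic + at most one slack machine
per component. -/
lemma forward {n m : ℕ} {pj : Fin n → ℝ} (hpj : ∀ j, 0 < pj j)
    {s : Fin m → ℝ} (hs : ∀ i, 0 < s i) (t : Fin m → ℝ) (T : ℝ)
    {x : Fin n → Fin m → ℝ}
    (hx : x ∈ PartialLPMS n m (fun j i => pj j / s i) t T)
    (hext : x ∈ Set.extremePoints ℝ (PartialLPMS n m (fun j i => pj j / s i) t T)) :
    (bipartiteGraph n m
        (fun j i => pj j / s i ≤ T ∧ 0 < x j i ∧ x j i < 1)).IsAcyclic ∧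
      ∀ i₁ i₂ : Fin m,
        (bipartiteGraph n m
            (fun j i => pj j / s i ≤ T ∧ 0 < x j i ∧ x j i < 1)).connectedComponentMk
            (inr i₁) =
          (bipartiteGraph n m
            (fun j i => pj j / s i ≤ T ∧ 0 < x j i ∧ x j i < 1)).connectedComponentMk
            (inr i₂) →
        (∑ j, (pj j / s i₁) * x j i₁ < T - t i₁) →
        (∑ j, (pj j / s i₂) * x j i₂ < T - t i₂) →
        i₁ = i₂ := by
  set E : Fin n → Fin m → Prop := fun j i => pj j / s i ≤ T ∧ 0 < x j i ∧ x j i < 1 with hE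
  have build : ∀ {a b : Fin n ⊕ Fin m} (w : (bipartiteGraph n m E).Walk a b),
      (∀ j, ∑ i, (1 / pj j) * netR w.darts j i
          = (1 / pj j) * ((if (inl j : Fin n ⊕ Fin m) = a then 1 else 0)
            - (if (inl j : Fin n ⊕ Fin m) = b then 1 else 0)))
      ∧ (∀ i, ∑ j, (pj j / s i) * ((1 / pj j) * netR w.darts j i)
          = (1 / s i) * ((if (inr i : Fin n ⊕ Fin m) = b then 1 else 0)
            - (if (inr i : Fin n ⊕ Fin m) = a then 1 else 0))) := by
    intro a b w
    constructor
    · intro j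
      rw [← Finset.mul_sum, row_sum w j]
    · intro i
      have : ∀ j, (pj j / s i) * ((1 / pj j) * netR w.darts j i)
          = (1 / s i) * netR w.darts j i := by
        intro j
        have h0 := (hpj j).ne'
        field_simp
      rw [Finset.sum_congr rfl (fun j _ => this j), ← Finset.mul_sum, col_sum w i]
  have hsupgen : ∀ {a b : Fin n ⊕ Fin m} (w : (bipartiteGraph n m E).Walk a b) (j i),
      (1 / pj j) * netR w.darts j i ≠ 0 → (pj j / s i ≤ T ∧ 0 < x j i) := by
    intro a b w j i hd
    have hnet : netR w.darts j i ≠ 0 := by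
      intro h0; exact hd (by rw [h0, mul_zero])
    have := netR_support hnet
    rw [hE] at this
    exact ⟨this.1, this.2.1⟩
  constructor
  · intro v c hc
    have hn : (c.darts.map Dart.edge).Nodup := hc.isCircuit.isTrail.edges_nodup
    have hnil : c.darts ≠ [] := by
      cases c with
      | nil => exact absurd rfl hc.ne_nil
      | cons h q => simp
    obtain ⟨j₀, i₀, hj₀⟩ := netR_exists_ne hn hnil
    set d : Fin n → Fin m → ℝ := fun j i => (1 / pj j) * netR c.darts j i with hd
    refine not_extreme_of_direction _ t T hx d ?_ ?_ ?_ ?_ hext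
    · intro j i hdd; simp only [hd] at hdd; exact hsupgen c j i hdd
    · intro j; simp only [hd]; rw [(build c).1 j, sub_self, mul_zero]
    · intro i hcontra
      exfalso; apply hcontra
      simp only [hd]
      rw [(build c).2 i, sub_self, mul_zero]
    · intro h0
      apply hj₀
      have := congrFun (congrFun h0 j₀) i₀
      simp only [hd, Pi.zero_apply] at this
      rcases mul_eq_zero.mp this with h | h
      · exact absurd h (one_div_ne_zero (hpj j₀).ne')
      · exact h
  · intro i₁ i₂ hcomp hs1 hs2
    by_contra hne12
    have hreach : (bipartiteGraph n m E).Reachable (inr i₁) (inr i₂) :=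
      (SimpleGraph.ConnectedComponent.eq).mp hcomp
    obtain ⟨w0⟩ := hreach
    set p := w0.bypass with hp
    have hpath : p.IsPath := Walk.bypass_isPath w0
    have hn : (p.darts.map Dart.edge).Nodup := hpath.isTrail.edges_nodup
    have hnil : p.darts ≠ [] := by
      cases hq : p with
      | nil => exact (hne12 rfl).elim
      | cons h q => simp
    obtain ⟨j₀, i₀, hj₀⟩ := netR_exists_ne hn hnil
    set d : Fin n → Fin m → ℝ := fun j i => (1 / pj j) * netR p.darts j i with hd
    refine not_extreme_of_direction _ t T hx d ?_ ?_ ?_ ?_ hext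
    · intro j i hdd; simp only [hd] at hdd; exact hsupgen p j i hdd
    · intro j; simp only [hd]
      rw [(build p).1 j, if_neg (by exact Sum.inl_ne_inr), if_neg (by exact Sum.inl_ne_inr),
        sub_self, mul_zero]
    · intro i hcontra
      simp only [hd] at hcontra
      rw [(build p).2 i] at hcontra
      by_cases h1 : i = i₁
      · subst h1; exact hs1
      · by_cases h2 : i = i₂
        · subst h2; exact hs2
        · exfalso; apply hcontra
          rw [if_neg (fun hc => h2 (Sum.inr_injective hc)),
            if_neg (fun hc => h1 (Sum.inr_injective hc)), sub_self, mul_zero]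
    · intro h0
      apply hj₀
      have := congrFun (congrFun h0 j₀) i₀
      simp only [hd, Pi.zero_apply] at this
      rcases mul_eq_zero.mp this with h | h
      · exact absurd h (one_div_ne_zero (hpj j₀).ne')
      · exact h


lemma backward {n m : ℕ} {pj : Fin n → ℝ} (hpj : ∀ j, 0 < pj j)
    {s : Fin m → ℝ} (hs : ∀ i, 0 < s i) (t : Fin m → ℝ) (T : ℝ)
    {x : Fin n → Fin m → ℝ}
    (hx : x ∈ PartialLPMS n m (fun j i => pj j / s i) t T)
    (hac : (bipartiteGraph n m
        (fun j i => pj j / s i ≤ T ∧ 0 < x j i ∧ x j i < 1)).IsAcyclic)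
    (huniq : ∀ i₁ i₂ : Fin m,
        (bipartiteGraph n m
            (fun j i => pj j / s i ≤ T ∧ 0 < x j i ∧ x j i < 1)).connectedComponentMk
            (inr i₁) =
          (bipartiteGraph n m
            (fun j i => pj j / s i ≤ T ∧ 0 < x j i ∧ x j i < 1)).connectedComponentMk
            (inr i₂) →
        (∑ j, (pj j / s i₁) * x j i₁ < T - t i₁) →
        (∑ j, (pj j / s i₂) * x j i₂ < T - t i₂) →
        i₁ = i₂) :
    x ∈ Set.extremePoints ℝ (PartialLPMS n m (fun j i => pj j / s i) t T) := by
  classical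
  obtain ⟨hx0, hxS, hxrow, hxcol⟩ := hx
  rw [mem_extremePoints]
  refine ⟨⟨hx0, hxS, hxrow, hxcol⟩, ?_⟩
  rintro x₁ ⟨h10, h1S, h1row, h1col⟩ x₂ ⟨h20, h2S, h2row, h2col⟩ hseg
  beta_reduce at hxS hxcol h1S h1col h2S h2col
  obtain ⟨α, β, hα, hβ, hαβ, hsum⟩ := hseg
  have hsump : ∀ j i, α * x₁ j i + β * x₂ j i = x j i := by
    intro j i
    have := congrFun (congrFun hsum j) i
    simpa using this
  set E : Fin n → Fin m → Prop := fun j i => pj j / s i ≤ T ∧ 0 < x j i ∧ x j i < 1 with hE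
  set G := bipartiteGraph n m E with hG
  -- it suffices to show x₁ = x₂
  suffices hxx : x₁ = x₂ by
    have hx1 : x₁ = x := by
      funext j i
      have := hsump j i
      rw [← hxx] at this
      have : (α + β) * x₁ j i = x j i := by rw [← this, hxx]; ring
      rw [hαβ, one_mul] at this
      exact this
    exact ⟨hx1, hxx ▸ hx1⟩
  by_contra hnexx
  set d : Fin n → Fin m → ℝ := fun j i => x₁ j i - x₂ j i with hd
  have hdnonzero : ∃ j i, d j i ≠ 0 := by
    by_contra hcon
    push_neg at hcon
    apply hnexx
    funext j i
    have := hcon j i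
    rw [hd] at this
    simp only at this
    linarith [this]
  obtain ⟨j₀, i₀, hj₀⟩ := hdnonzero
  -- entries of x₁, x₂ are at most 1
  have hle1 : ∀ (y : Fin n → Fin m → ℝ), (∀ j i, 0 ≤ y j i) → (∀ j, ∑ i, y j i = 1) →
      ∀ j i, y j i ≤ 1 := by
    intro y hy0 hyrow j i
    rw [← hyrow j]
    exact Finset.single_le_sum (fun i _ => hy0 j i) (Finset.mem_univ i)
  -- support of d is contained in the fractional edges
  have hsup : ∀ j i, d j i ≠ 0 → E j i := by
    intro j i hdd
    rw [hd] at hdd; simp only at hdd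
    rw [hE]
    have hple : pj j / s i ≤ T := by
      by_contra hc
      push_neg at hc
      rw [h1S j i hc, h2S j i hc] at hdd
      exact hdd (by ring)
    refine ⟨hple, ?_, ?_⟩
    · rcases lt_or_eq_of_le (hx0 j i) with h | h
      · exact h
      · exfalso
        have hthis := hsump j i
        rw [← h] at hthis
        have t1 : 0 ≤ α * x₁ j i := mul_nonneg hα.le (h10 j i)
        have t2 : 0 ≤ β * x₂ j i := mul_nonneg hβ.le (h20 j i)
        have z1 : α * x₁ j i = 0 := by linarith
        have z2 : β * x₂ j i = 0 := by linarith
        have h1 : x₁ j i = 0 := (mul_eq_zero.mp z1).resolve_left hα.ne'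
        have h2 : x₂ j i = 0 := (mul_eq_zero.mp z2).resolve_left hβ.ne'
        rw [h1, h2] at hdd
        exact hdd (by ring)
    · rcases lt_or_eq_of_le (hle1 x hx0 hxrow j i) with h | h
      · exact h
      · exfalso
        have hthis := hsump j i
        rw [h] at hthis
        have e1 := hle1 x₁ h10 h1row j i
        have e2 := hle1 x₂ h20 h2row j i
        have expand : α * (1 - x₁ j i) + β * (1 - x₂ j i)
            = (α + β) - (α * x₁ j i + β * x₂ j i) := by ring
        rw [hαβ, hthis] at expand
        have t1 : 0 ≤ α * (1 - x₁ j i) := mul_nonneg hα.le (by linarith)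
        have t2 : 0 ≤ β * (1 - x₂ j i) := mul_nonneg hβ.le (by linarith)
        have z1 : α * (1 - x₁ j i) = 0 := by linarith
        have z2 : β * (1 - x₂ j i) = 0 := by linarith
        have h1 : x₁ j i = 1 := by
          have := (mul_eq_zero.mp z1).resolve_left hα.ne'
          linarith
        have h2 : x₂ j i = 1 := by
          have := (mul_eq_zero.mp z2).resolve_left hβ.ne'
          linarith
        rw [h1, h2] at hdd
        exact hdd (by ring)
  -- rows of d sum to zero
  have hrow : ∀ j, ∑ i, d j i = 0 := by
    intro j
    rw [hd]
    simp only
    rw [Finset.sum_sub_distrib, h1row j, h2row j, sub_self]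
  -- tight machines are balanced
  have htight : ∀ i, ¬(∑ j, (pj j / s i) * x j i < T - t i) →
      ∑ j, (pj j / s i) * d j i = 0 := by
    intro i hslack
    have heq : ∑ j, (pj j / s i) * x j i = T - t i :=
      le_antisymm (hxcol i) (not_lt.mp hslack)
    have hsplit : α * (∑ j, (pj j / s i) * x₁ j i) + β * (∑ j, (pj j / s i) * x₂ j i)
        = ∑ j, (pj j / s i) * x j i := by
      rw [Finset.mul_sum, Finset.mul_sum, ← Finset.sum_add_distrib]
      apply Finset.sum_congr rfl
      intro j _
      rw [← hsump j i]; ring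
    have e1 := h1col i
    have e2 := h2col i
    have expand : α * ((T - t i) - ∑ j, (pj j / s i) * x₁ j i)
          + β * ((T - t i) - ∑ j, (pj j / s i) * x₂ j i)
        = (α + β) * (T - t i)
          - (α * (∑ j, (pj j / s i) * x₁ j i) + β * (∑ j, (pj j / s i) * x₂ j i)) := by
      ring
    rw [hαβ, one_mul, hsplit, heq, sub_self] at expand
    have t1 : 0 ≤ α * ((T - t i) - ∑ j, (pj j / s i) * x₁ j i) :=
      mul_nonneg hα.le (by linarith)
    have t2 : 0 ≤ β * ((T - t i) - ∑ j, (pj j / s i) * x₂ j i) :=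
      mul_nonneg hβ.le (by linarith)
    have z1 : α * ((T - t i) - ∑ j, (pj j / s i) * x₁ j i) = 0 := by linarith
    have z2 : β * ((T - t i) - ∑ j, (pj j / s i) * x₂ j i) = 0 := by linarith
    have h1 : ∑ j, (pj j / s i) * x₁ j i = T - t i := by
      have := (mul_eq_zero.mp z1).resolve_left hα.ne'
      linarith
    have h2 : ∑ j, (pj j / s i) * x₂ j i = T - t i := by
      have := (mul_eq_zero.mp z2).resolve_left hβ.ne'
      linarith
    rw [hd]
    simp only
    have : ∑ j, pj j / s i * (x₁ j i - x₂ j i)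
        = (∑ j, (pj j / s i) * x₁ j i) - ∑ j, (pj j / s i) * x₂ j i := by
      rw [← Finset.sum_sub_distrib]
      apply Finset.sum_congr rfl
      intro j _; ring
    rw [this, h1, h2, sub_self]
  -- the support relation
  set Dv : (Fin n ⊕ Fin m) → (Fin n ⊕ Fin m) → ℝ := fun a b =>
    match a, b with
    | inl j, inr i => d j i
    | inr i, inl j => d j i
    | _, _ => 0 with hDv
  set Hrel : (Fin n ⊕ Fin m) → (Fin n ⊕ Fin m) → Prop := fun a b =>
    G.Adj a b ∧ Dv a b ≠ 0 with hHrel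
  have hDvsymm : ∀ a b, Dv a b = Dv b a := by
    rintro (j | i) (j' | i') <;> simp only [hDv]
  have hHsymm : ∀ a b, Hrel a b → Hrel b a := by
    rintro a b ⟨hadj, hdv⟩
    exact ⟨hadj.symm, by rw [← hDvsymm a b]; exact hdv⟩
  have hHedge : ∀ j i, d j i ≠ 0 → Hrel (inl j) (inr i) := by
    intro j i hdd
    exact ⟨bg_adj.mpr (Or.inl ⟨j, i, rfl, rfl, hsup j i hdd⟩), hdd⟩
  -- degree ≥ 2 at jobs
  have hnext_job : ∀ (j : Fin n) (w : Fin n ⊕ Fin m), Hrel (inl j) w →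
      ∃ w', Hrel (inl j) w' ∧ w' ≠ w := by
    rintro j w ⟨hadj, hdv⟩
    rcases bg_adj.mp hadj with ⟨j', i', hj', hi', -⟩ | ⟨j', i', hj', hi', -⟩
    swap
    · exact absurd hj' (by simp)
    obtain rfl : j = j' := Sum.inl_injective hj'
    subst hi'
    have hdji : d j i' ≠ 0 := by
      simp only [hDv] at hdv; exact hdv
    have : ∃ i'' ≠ i', d j i'' ≠ 0 := by
      by_contra hcon
      push_neg at hcon
      have : ∑ i, d j i = d j i' := by
        apply Finset.sum_eq_single
        · intro b _ hb; exact hcon b hb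
        · intro hb; exact absurd (Finset.mem_univ i') hb
      rw [hrow j] at this
      exact hdji this.symm
    obtain ⟨i'', hne'', hd''⟩ := this
    exact ⟨inr i'', hHedge j i'' hd'', by simp [hne'']⟩
  -- degree ≥ 2 at tight machines
  have hnext_machine : ∀ (i : Fin m) (w : Fin n ⊕ Fin m),
      ¬(∑ j, (pj j / s i) * x j i < T - t i) → Hrel (inr i) w →
      ∃ w', Hrel (inr i) w' ∧ w' ≠ w := by
    rintro i w htight' ⟨hadj, hdv⟩
    rcases bg_adj.mp hadj with ⟨j', i', hj', hi', -⟩ | ⟨j', i', hj', hi', -⟩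
    · exact absurd hj' (by simp)
    obtain rfl : i = i' := Sum.inr_injective hj'
    subst hi'
    have hdji : d j' i ≠ 0 := by
      simp only [hDv] at hdv; exact hdv
    have hp : ∀ j, 0 < pj j / s i := fun j => div_pos (hpj j) (hs i)
    have : ∃ j'' ≠ j', d j'' i ≠ 0 := by
      by_contra hcon
      push_neg at hcon
      have hz : ∑ j, (pj j / s i) * d j i = (pj j' / s i) * d j' i := by
        apply Finset.sum_eq_single
        · intro b _ hb; rw [hcon b hb, mul_zero]
        · intro hb; exact absurd (Finset.mem_univ j') hb
      rw [htight i htight'] at hz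
      exact hdji (by
        rcases mul_eq_zero.mp hz.symm with h | h
        · exact absurd h (hp j').ne'
        · exact h)
    obtain ⟨j'', hne'', hd''⟩ := this
    refine ⟨inl j'', hHsymm _ _ (hHedge j'' i hd''), by simp [hne'']⟩
  -- choose the root vertex v₀
  have hstart : ∃ v₀ : Fin n ⊕ Fin m,
      (∃ w, Hrel v₀ w) ∧ G.Reachable v₀ (inl j₀) ∧
      (∀ i : Fin m, (∑ j, (pj j / s i) * x j i < T - t i) →
        G.Reachable (inr i) (inl j₀) → (∃ w, Hrel (inr i) w) → inr i = v₀) := by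
    by_cases hsl : ∃ i : Fin m, (∑ j, (pj j / s i) * x j i < T - t i) ∧
        G.Reachable (inr i) (inl j₀) ∧ (∃ w, Hrel (inr i) w)
    · obtain ⟨istar, hslack, hreach, hedge⟩ := hsl
      refine ⟨inr istar, hedge, hreach, ?_⟩
      intro i hsl' hreach' _
      have : i = istar := huniq i istar
        (SimpleGraph.ConnectedComponent.eq.mpr (hreach'.trans hreach.symm)) hsl' hslack
      rw [this]
    · refine ⟨inl j₀, ⟨inr i₀, hHedge j₀ i₀ hj₀⟩, Reachable.refl _, ?_⟩
      intro i hsl' hreach' hedge'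
      exact absurd ⟨i, hsl', hreach', hedge'⟩ hsl
  obtain ⟨v₀, hA, hB, hC⟩ := hstart
  -- grow arbitrarily long paths whose darts are in the support
  have grow : ∀ k : ℕ, ∃ (u : Fin n ⊕ Fin m) (p : G.Walk u v₀),
      p.IsPath ∧ (∀ e ∈ p.darts, Hrel e.toProd.1 e.toProd.2) ∧ p.length = k := by
    intro k
    induction k with
    | zero => exact ⟨v₀, Walk.nil, by simp, by simp, rfl⟩
    | succ k ih =>
      obtain ⟨u, p, hpath, hdarts, hlen⟩ := ih
      have key : ∃ w, Hrel w u ∧ w ∉ p.support := by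
        cases p with
        | nil =>
          obtain ⟨w, hw⟩ := hA
          refine ⟨w, hHsymm _ _ hw, ?_⟩
          rw [Walk.support_nil, List.mem_singleton]
          intro hc
          exact hw.1.ne hc.symm
        | @cons _ u' _ hadj q =>
          have hfirst : Hrel u u' := by
            have hmemd : (⟨(u, u'), hadj⟩ : G.Dart) ∈ (Walk.cons hadj q).darts := by
              rw [Walk.darts_cons]; exact List.mem_cons_self
            exact hdarts _ hmemd
          have hnotq : u ∉ q.support := ((Walk.cons_isPath_iff hadj q).mp hpath).2
          obtain ⟨w', hw', hwne'⟩ : ∃ w', Hrel u w' ∧ w' ≠ u' := by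
            cases u with
            | inl j => exact hnext_job j u' hfirst
            | inr i =>
              by_cases hslk : ∑ jj, (pj jj / s i) * x jj i < T - t i
              · exfalso
                have hreach : G.Reachable (inr i) (inl j₀) :=
                  ((Walk.cons hadj q).reachable).trans hB
                have hvv := hC i hslk hreach ⟨u', hfirst⟩
                have hver : (inr i : Fin n ⊕ Fin m) ∉ q.support := hnotq
                rw [hvv] at hver
                exact hver q.end_mem_support
              · exact hnext_machine i u' hslk hfirst
          rcases Classical.em (w' ∈ (Walk.cons hadj q).support) with hmem | hmem
          swap
          · exact ⟨w', hHsymm _ _ hw', hmem⟩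
          · exfalso
            have hq2path : ((Walk.cons hadj q).takeUntil w' hmem).IsPath :=
              hpath.takeUntil hmem
            have hq2edges : s(w', u) ∉ ((Walk.cons hadj q).takeUntil w' hmem).edges := by
              intro hedge
              have hsub := Walk.edges_takeUntil_subset (Walk.cons hadj q) hmem
              have hmm : s(w', u) ∈ (Walk.cons hadj q).edges := hsub hedge
              rw [Walk.edges_cons] at hmm
              rcases List.mem_cons.mp hmm with heq | hmem2
              · rcases Sym2.eq_iff.mp heq with ⟨h1, h2⟩ | ⟨h1, h2⟩
                · exact hw'.1.ne h1.symm
                · exact hwne' h1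
              · exact hnotq (Walk.snd_mem_support_of_mem_edges q hmem2)
            have hcyc := SimpleGraph.Path.cons_isCycle
              ⟨(Walk.cons hadj q).takeUntil w' hmem, hq2path⟩ hw'.1.symm hq2edges
            exact hac _ hcyc
      obtain ⟨w, hw, hwmem⟩ := key
      refine ⟨w, Walk.cons hw.1 p, (Walk.cons_isPath_iff _ _).mpr ⟨hpath, hwmem⟩, ?_,
        by rw [Walk.length_cons, hlen]⟩
      intro e he
      rw [Walk.darts_cons] at he
      rcases List.mem_cons.mp he with heq | he'
      · rw [heq]; exact hw
      · exact hdarts e he'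
  obtain ⟨u, p, hpath, -, hlen⟩ := grow (Fintype.card (Fin n ⊕ Fin m))
  have := hpath.length_lt
  omega


end ExtremeAux

/-- In the uniform machine scheduling setting (`p j i = pj j / s i`), a feasible
point `x` of `PARTIAL-LP-MS(P,t,T')` — where `T'` is the smallest natural `T` making
the polyhedron nonempty — is an extreme point iff `G(x)` is a forest and every
connected component of `G(x)` contains at most one machine-node whose completion
time is strictly smaller than `T'`. -/
theorem extremePoint_iff_forest_and_unique_slack_machine
    (n m : ℕ) (pj : Fin n → ℝ) (hpj : ∀ j, 0 < pj j)
    (s : Fin m → ℝ) (hs : ∀ i, 0 < s i)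
    (t : Fin m → ℕ) (T' : ℕ)
    (hT' : IsLeast {T : ℕ |
      (PartialLPMS n m (fun j i => pj j / s i) (fun i => (t i : ℝ)) (T : ℝ)).Nonempty} T')
    (x : Fin n → Fin m → ℝ)
    (hx : x ∈ PartialLPMS n m (fun j i => pj j / s i) (fun i => (t i : ℝ)) (T' : ℝ)) :
    x ∈ Set.extremePoints ℝ
        (PartialLPMS n m (fun j i => pj j / s i) (fun i => (t i : ℝ)) (T' : ℝ)) ↔
      ((fracGraph n m (fun j i => pj j / s i) (T' : ℝ) x).IsAcyclic ∧
       ∀ i₁ i₂ : Fin m,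
         (fracGraph n m (fun j i => pj j / s i) (T' : ℝ) x).connectedComponentMk
             (Sum.inr i₁) =
           (fracGraph n m (fun j i => pj j / s i) (T' : ℝ) x).connectedComponentMk
             (Sum.inr i₂) →
         (t i₁ : ℝ) + ∑ j, (pj j / s i₁) * x j i₁ < (T' : ℝ) →
         (t i₂ : ℝ) + ∑ j, (pj j / s i₂) * x j i₂ < (T' : ℝ) →
         i₁ = i₂) := by
  constructor
  · intro hext
    have h := ExtremeAux.forward hpj hs (fun i => (t i : ℝ)) (T' : ℝ) hx hext
    refine ⟨h.1, ?_⟩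
    intro i₁ i₂ hcomp hs1 hs2
    exact h.2 i₁ i₂ hcomp (by linarith) (by linarith)
  · rintro ⟨hac, huniq⟩
    exact ExtremeAux.backward hpj hs _ _ hx hac
      (fun i₁ i₂ hcomp hs1 hs2 => huniq i₁ i₂ hcomp (by linarith) (by linarith))
end

section
/- The optimal value of the multi-knapsack LP relaxation with capacities C_1,…,C_m equals the optimal value of the single-knapsack LP relaxation in which the m knapsacks are merged into one knapsack of capacity C_1 + … + C_m; that is, OPT_LP(C,w,p) = max { Σ_j p_j y_j : 0 ≤ y_j ≤ 1 for all j, Σ_j w_j y_j ≤ Σ_{i=1}^m C_i }. -/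
/-- The optimal value of the multi-knapsack LP relaxation equals the optimal value of
the single-knapsack LP relaxation with the merged capacity `C 1 + … + C m`. -/
theorem multiKnapsack_lp_eq_surrogate_lp
    (n m : ℕ)
    (w : Fin n → ℝ) (hw : ∀ j, 0 < w j)
    (p : Fin n → ℝ) (hp : ∀ j, 0 ≤ p j)
    (C : Fin m → ℝ) (hC : ∀ i, 0 ≤ C i)
    (OPTmulti OPTsingle : ℝ)
    (hmulti : IsGreatest {v : ℝ | ∃ x : Fin n → Fin m → ℝ,
      ((∀ j i, 0 ≤ x j i) ∧
       (∀ i, ∑ j, w j * x j i ≤ C i) ∧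
       (∀ j, ∑ i, x j i ≤ 1)) ∧
      ∑ j, ∑ i, p j * x j i = v} OPTmulti)
    (hsingle : IsGreatest {v : ℝ | ∃ y : Fin n → ℝ,
      ((∀ j, 0 ≤ y j ∧ y j ≤ 1) ∧
       ∑ j, w j * y j ≤ ∑ i, C i) ∧
      ∑ j, p j * y j = v} OPTsingle) :
    OPTmulti = OPTsingle := by
  apply le_antisymm
  · -- OPTmulti ≤ OPTsingle : aggregate
    obtain ⟨x, ⟨hx0, hxC, hx1⟩, hxv⟩ := hmulti.1
    apply hsingle.2
    refine ⟨fun j => ∑ i, x j i, ⟨fun j => ⟨Finset.sum_nonneg fun i _ => hx0 j i, hx1 j⟩, ?_⟩, ?_⟩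
    · calc ∑ j, w j * ∑ i, x j i = ∑ i, ∑ j, w j * x j i := by
            simp_rw [Finset.mul_sum]; exact Finset.sum_comm
        _ ≤ ∑ i, C i := Finset.sum_le_sum fun i _ => hxC i
    · rw [← hxv]; simp_rw [Finset.mul_sum]
  · -- OPTsingle ≤ OPTmulti : split proportionally
    obtain ⟨y, ⟨hy01, hyC⟩, hyv⟩ := hsingle.1
    apply hmulti.2
    by_cases hS : ∑ i, C i = 0
    · -- all capacities zero ⇒ y = 0
      have hy0 : ∀ j, y j = 0 := by
        intro j
        have hterm : ∀ j ∈ Finset.univ, (0:ℝ) ≤ w j * y j :=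
          fun j _ => mul_nonneg (hw j).le (hy01 j).1
        have hsum0 : ∑ j, w j * y j = 0 :=
          le_antisymm (hyC.trans_eq hS) (Finset.sum_nonneg hterm)
        have := (Finset.sum_eq_zero_iff_of_nonneg hterm).1 hsum0 j (Finset.mem_univ j)
        exact (mul_eq_zero.1 this).resolve_left (hw j).ne' |>.symm ▸ rfl
      refine ⟨fun _ _ => 0, ⟨fun _ _ => le_refl 0, fun i => ?_, fun j => ?_⟩, ?_⟩
      · simpa using hC i
      · simp
      · rw [← hyv]; simp [hy0]
    · have hSpos : 0 < ∑ i, C i :=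
        lt_of_le_of_ne (Finset.sum_nonneg fun i _ => hC i) (Ne.symm hS)
      set S := ∑ i, C i with hSdef
      refine ⟨fun j i => y j * (C i / S), ⟨?_, ?_, ?_⟩, ?_⟩
      · intro j i
        exact mul_nonneg (hy01 j).1 (div_nonneg (hC i) hSpos.le)
      · intro i
        have : ∑ j, w j * (y j * (C i / S)) = (∑ j, w j * y j) * (C i / S) := by
          rw [Finset.sum_mul]; exact Finset.sum_congr rfl fun j _ => (mul_assoc _ _ _).symm
        rw [this]
        calc (∑ j, w j * y j) * (C i / S) ≤ S * (C i / S) :=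
              mul_le_mul_of_nonneg_right hyC (div_nonneg (hC i) hSpos.le)
          _ = C i := by field_simp
      · intro j
        rw [← Finset.mul_sum, ← Finset.sum_div, ← hSdef, div_self hS, mul_one]
        exact (hy01 j).2
      · rw [← hyv]
        refine Finset.sum_congr rfl fun j _ => ?_
        rw [← Finset.mul_sum, ← Finset.mul_sum, ← Finset.sum_div, ← hSdef, div_self hS,
          mul_one]
end

section
/- Assume the items are indexed so that p_1/w_1 ≥ … ≥ p_n/w_n and Σ_{j=1}^n w_j > Σ_{i=1}^m C_i; set s_0 = 0 and for k = 1,…,m let s_k = min{ j : Σ_{l=1}^j w_l > Σ_{i=1}^k C_i } be the critical item relative to knapsack k. Then max{ p_{s_1}, …, p_{s_m}, Σ_{k=1}^m Σ_{j=s_{k−1}+1}^{s_k−1} p_j } ≥ OPT_LP(C,w,p) / (m+1). -/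
open Finset

private lemma icc_one_eq_ioc (x : ℕ) : Finset.Icc 1 x = Finset.Ioc 0 x := by
  ext j; simp only [Finset.mem_Icc, Finset.mem_Ioc]; omega

private lemma icc_succ_eq_ioc (a b : ℕ) : Finset.Icc (a+1) b = Finset.Ioc a b := by
  ext j; simp only [Finset.mem_Icc, Finset.mem_Ioc]; omega

/-- Telescoping bound for the greedy segments. -/
private lemma tele_bound (n M : ℕ) (p : ℕ → ℝ) (s : ℕ → ℕ) (hs0 : s 0 = 0)
    (hp : ∀ j ∈ Finset.Icc 1 n, 0 ≤ p j)
    (hsn : ∀ k ∈ Finset.Icc 1 M, s k ∈ Finset.Icc 1 n)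
    (hmono : ∀ k ∈ Finset.Icc 1 M, s (k-1) ≤ s k) :
    ∀ K, K ≤ M → ∑ j ∈ Finset.Icc 1 (s K), p j ≤
      ∑ k ∈ Finset.Icc 1 K,
        ((∑ j ∈ Finset.Icc (s (k-1)+1) (s k - 1), p j) + p (s k)) := by
  intro K
  induction K with
  | zero => intro _; simp [hs0]
  | succ K ih =>
    intro hK
    have hK' : K ≤ M := Nat.le_of_succ_le hK
    have hKm : K + 1 ∈ Finset.Icc 1 M := by simp only [Finset.mem_Icc]; omega
    have ha : s K ≤ s (K+1) := by
      have := hmono (K+1) hKm; simpa using this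
    have hb : s (K+1) ∈ Finset.Icc 1 n := hsn _ hKm
    obtain ⟨hb1, hbn⟩ := Finset.mem_Icc.mp hb
    have hsplit : ∑ j ∈ Finset.Icc 1 (s (K+1)), p j
        = ∑ j ∈ Finset.Icc 1 (s K), p j + ∑ j ∈ Finset.Ioc (s K) (s (K+1)), p j := by
      rw [icc_one_eq_ioc (s (K+1)), icc_one_eq_ioc (s K)]
      exact (Finset.sum_Ioc_consecutive _ (Nat.zero_le _) ha).symm
    have hrhs : ∑ k ∈ Finset.Icc 1 (K+1),
          ((∑ j ∈ Finset.Icc (s (k-1)+1) (s k - 1), p j) + p (s k))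
        = ∑ k ∈ Finset.Icc 1 K,
          ((∑ j ∈ Finset.Icc (s (k-1)+1) (s k - 1), p j) + p (s k))
          + ((∑ j ∈ Finset.Icc (s K + 1) (s (K+1) - 1), p j) + p (s (K+1))) := by
      rw [Finset.sum_Icc_succ_top (by omega : 1 ≤ K + 1)]
      simp
    have hseg : ∑ j ∈ Finset.Ioc (s K) (s (K+1)), p j
        ≤ (∑ j ∈ Finset.Icc (s K + 1) (s (K+1) - 1), p j) + p (s (K+1)) := by
      rcases eq_or_lt_of_le ha with heq | hlt
      · have h1 : Finset.Ioc (s K) (s (K+1)) = ∅ := by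
          rw [← heq]; exact Finset.Ioc_self _
        have h2 : Finset.Icc (s K + 1) (s (K+1) - 1) = ∅ := by
          apply Finset.Icc_eq_empty; omega
        rw [h1, h2]
        simpa using hp _ hb
      · obtain ⟨c, hc⟩ : ∃ c, s (K+1) = c + 1 := ⟨s (K+1) - 1, by omega⟩
        have hac : s K ≤ c := by omega
        rw [hc, Finset.sum_Ioc_succ_top hac, Nat.add_sub_cancel,
          icc_succ_eq_ioc (s K) c]
    calc ∑ j ∈ Finset.Icc 1 (s (K+1)), p j
        = ∑ j ∈ Finset.Icc 1 (s K), p j + ∑ j ∈ Finset.Ioc (s K) (s (K+1)), p j := hsplit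
      _ ≤ (∑ k ∈ Finset.Icc 1 K,
            ((∑ j ∈ Finset.Icc (s (k-1)+1) (s k - 1), p j) + p (s k)))
          + ((∑ j ∈ Finset.Icc (s K + 1) (s (K+1) - 1), p j) + p (s (K+1))) :=
          add_le_add (ih hK') hseg
      _ = _ := hrhs.symm

/-- Dantzig-type bound: any LP-feasible value is at most the total profit of
items `1,…,t` where `t` is critical for the aggregated capacity. -/
private lemma lp_bound (n m : ℕ) (w p C : ℕ → ℝ) (t : ℕ)
    (hw : ∀ j ∈ Finset.Icc 1 n, 0 < w j) (hp : ∀ j ∈ Finset.Icc 1 n, 0 ≤ p j)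
    (hsorted : ∀ j ∈ Finset.Icc 1 n, ∀ k ∈ Finset.Icc 1 n, j ≤ k →
      p k / w k ≤ p j / w j)
    (htn : t ∈ Finset.Icc 1 n)
    (htC : ∑ i ∈ Finset.Icc 1 m, C i < ∑ l ∈ Finset.Icc 1 t, w l)
    (x : ℕ → ℕ → ℝ)
    (hx0 : ∀ j ∈ Finset.Icc 1 n, ∀ i ∈ Finset.Icc 1 m, 0 ≤ x j i)
    (hxC : ∀ i ∈ Finset.Icc 1 m, ∑ j ∈ Finset.Icc 1 n, w j * x j i ≤ C i)
    (hx1 : ∀ j ∈ Finset.Icc 1 n, ∑ i ∈ Finset.Icc 1 m, x j i ≤ 1) :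
    ∑ j ∈ Finset.Icc 1 n, ∑ i ∈ Finset.Icc 1 m, p j * x j i
      ≤ ∑ j ∈ Finset.Icc 1 t, p j := by
  obtain ⟨ht1, htle⟩ := Finset.mem_Icc.mp htn
  set y : ℕ → ℝ := fun j => ∑ i ∈ Finset.Icc 1 m, x j i with hy
  have hval : ∑ j ∈ Finset.Icc 1 n, ∑ i ∈ Finset.Icc 1 m, p j * x j i
      = ∑ j ∈ Finset.Icc 1 n, p j * y j := by
    refine Finset.sum_congr rfl fun j _ => ?_
    rw [hy, Finset.mul_sum]
  have hy0 : ∀ j ∈ Finset.Icc 1 n, 0 ≤ y j := fun j hj =>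
    Finset.sum_nonneg fun i hi => hx0 j hj i hi
  have hS : ∑ j ∈ Finset.Icc 1 n, w j * y j ≤ ∑ i ∈ Finset.Icc 1 m, C i := by
    have : ∑ j ∈ Finset.Icc 1 n, w j * y j
        = ∑ i ∈ Finset.Icc 1 m, ∑ j ∈ Finset.Icc 1 n, w j * x j i := by
      rw [Finset.sum_comm]
      exact Finset.sum_congr rfl fun j _ => by rw [hy, Finset.mul_sum]
    rw [this]
    exact Finset.sum_le_sum hxC
  set r : ℝ := p t / w t with hr
  have hwt : 0 < w t := hw t htn
  have hr0 : 0 ≤ r := div_nonneg (hp t htn) hwt.le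
  have hsub : Finset.Icc 1 t ⊆ Finset.Icc 1 n :=
    Finset.Icc_subset_Icc le_rfl htle
  have h1 : ∀ j ∈ Finset.Icc 1 t, p j * y j ≤ p j - r * (w j * (1 - y j)) := by
    intro j hj
    have hjn : j ∈ Finset.Icc 1 n := hsub hj
    have hjt : j ≤ t := (Finset.mem_Icc.mp hj).2
    have hrat : r ≤ p j / w j := hsorted j hjn t htn hjt
    have hwj : 0 < w j := hw j hjn
    have hrw : r * w j ≤ p j := (le_div_iff₀ hwj).mp hrat
    have hy1j : y j ≤ 1 := hx1 j hjn
    nlinarith [mul_nonneg (sub_nonneg.mpr hrw) (sub_nonneg.mpr hy1j)]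
  have h2 : ∀ j ∈ Finset.Ioc t n, p j * y j ≤ r * (w j * y j) := by
    intro j hj
    obtain ⟨hjt, hjn'⟩ := Finset.mem_Ioc.mp hj
    have hjn : j ∈ Finset.Icc 1 n := Finset.mem_Icc.mpr ⟨by omega, hjn'⟩
    have hrat : p j / w j ≤ r := hsorted t htn j hjn hjt.le
    have hwj : 0 < w j := hw j hjn
    have hpj : p j ≤ r * w j := (div_le_iff₀ hwj).mp hrat
    have hy0j : 0 ≤ y j := hy0 j hjn
    nlinarith [mul_le_mul_of_nonneg_right hpj hy0j]
  have hsplitn : ∀ f : ℕ → ℝ, ∑ j ∈ Finset.Icc 1 n, f j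
      = ∑ j ∈ Finset.Icc 1 t, f j + ∑ j ∈ Finset.Ioc t n, f j := by
    intro f
    rw [icc_one_eq_ioc n, icc_one_eq_ioc t]
    exact (Finset.sum_Ioc_consecutive _ (Nat.zero_le _) htle).symm
  have hkey1 : ∑ j ∈ Finset.Icc 1 t, (p j - r * (w j * (1 - y j)))
      = ∑ j ∈ Finset.Icc 1 t, p j
        - r * (∑ j ∈ Finset.Icc 1 t, w j - ∑ j ∈ Finset.Icc 1 t, w j * y j) := by
    rw [Finset.sum_sub_distrib, ← Finset.mul_sum, ← Finset.sum_sub_distrib]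
    congr 2
    refine Finset.sum_congr rfl fun j _ => by ring
  have hkey2 : ∑ j ∈ Finset.Ioc t n, r * (w j * y j)
      = r * ∑ j ∈ Finset.Ioc t n, w j * y j := by
    rw [Finset.mul_sum]
  have hWS : ∑ j ∈ Finset.Icc 1 t, w j * y j + ∑ j ∈ Finset.Ioc t n, w j * y j
      ≤ ∑ i ∈ Finset.Icc 1 m, C i := by
    rw [← hsplitn fun j => w j * y j]; exact hS
  calc ∑ j ∈ Finset.Icc 1 n, ∑ i ∈ Finset.Icc 1 m, p j * x j i
      = ∑ j ∈ Finset.Icc 1 t, p j * y j + ∑ j ∈ Finset.Ioc t n, p j * y j := by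
        rw [hval]; exact hsplitn fun j => p j * y j
    _ ≤ ∑ j ∈ Finset.Icc 1 t, (p j - r * (w j * (1 - y j)))
        + ∑ j ∈ Finset.Ioc t n, r * (w j * y j) :=
        add_le_add (Finset.sum_le_sum h1) (Finset.sum_le_sum h2)
    _ ≤ ∑ j ∈ Finset.Icc 1 t, p j := by
        rw [hkey1, hkey2]
        nlinarith [hWS, htC, hr0]

/-- Martello–Toth greedy bound: with items `1,…,n` sorted by nonincreasing
profit-to-weight ratio and `s k` the critical item relative to knapsack `k`
(`s 0 = 0`), the best of the `m` critical-item profits and the profit of the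
greedily packed integral part is at least `OPT_LP / (m+1)`. -/
theorem greedy_is_m_plus_one_approx
    (n m : ℕ) (hm : 1 ≤ m)
    (w p : ℕ → ℝ)
    (hw : ∀ j ∈ Finset.Icc 1 n, 0 < w j)
    (hp : ∀ j ∈ Finset.Icc 1 n, 0 ≤ p j)
    (C : ℕ → ℝ) (hC : ∀ i ∈ Finset.Icc 1 m, 0 ≤ C i)
    (hsorted : ∀ j ∈ Finset.Icc 1 n, ∀ k ∈ Finset.Icc 1 n, j ≤ k →
      p k / w k ≤ p j / w j)
    (hsum : ∑ i ∈ Finset.Icc 1 m, C i < ∑ j ∈ Finset.Icc 1 n, w j)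
    (s : ℕ → ℕ) (hs0 : s 0 = 0)
    (hs : ∀ k ∈ Finset.Icc 1 m,
      IsLeast {j | j ∈ Finset.Icc 1 n ∧
        (∑ i ∈ Finset.Icc 1 k, C i) < ∑ l ∈ Finset.Icc 1 j, w l} (s k))
    (OPT : ℝ)
    (hOPT : IsGreatest {v : ℝ | ∃ x : ℕ → ℕ → ℝ,
      ((∀ j ∈ Finset.Icc 1 n, ∀ i ∈ Finset.Icc 1 m, 0 ≤ x j i) ∧
       (∀ i ∈ Finset.Icc 1 m, ∑ j ∈ Finset.Icc 1 n, w j * x j i ≤ C i) ∧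
       (∀ j ∈ Finset.Icc 1 n, ∑ i ∈ Finset.Icc 1 m, x j i ≤ 1)) ∧
      ∑ j ∈ Finset.Icc 1 n, ∑ i ∈ Finset.Icc 1 m, p j * x j i = v} OPT) :
    OPT / (m + 1) ≤
      max ((Finset.Icc 1 m).sup' (Finset.nonempty_Icc.mpr hm) (fun k => p (s k)))
          (∑ k ∈ Finset.Icc 1 m,
            ∑ j ∈ Finset.Icc (s (k - 1) + 1) (s k - 1), p j) := by
  obtain ⟨⟨x, ⟨hx0, hxC, hx1⟩, hval⟩, -⟩ := hOPT
  have hmm : m ∈ Finset.Icc 1 m := Finset.mem_Icc.mpr ⟨hm, le_rfl⟩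
  obtain ⟨⟨htn, htC⟩, -⟩ := hs m hmm
  -- Step A: OPT ≤ ∑_{j ≤ s m} p j
  have hA : OPT ≤ ∑ j ∈ Finset.Icc 1 (s m), p j := by
    rw [← hval]
    exact lp_bound n m w p C (s m) hw hp hsorted htn htC x hx0 hxC hx1
  -- monotonicity of s
  have hsn : ∀ k ∈ Finset.Icc 1 m, s k ∈ Finset.Icc 1 n := fun k hk => (hs k hk).1.1
  have hmono : ∀ k ∈ Finset.Icc 1 m, s (k-1) ≤ s k := by
    intro k hk
    obtain ⟨hk1, hkm⟩ := Finset.mem_Icc.mp hk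
    rcases eq_or_lt_of_le hk1 with h | h
    · rw [← h]; simp [hs0]
    · have hk1m : k - 1 ∈ Finset.Icc 1 m := Finset.mem_Icc.mpr ⟨by omega, by omega⟩
      refine (hs (k-1) hk1m).2 ⟨(hs k hk).1.1, ?_⟩
      refine lt_of_le_of_lt ?_ (hs k hk).1.2
      apply Finset.sum_le_sum_of_subset_of_nonneg
      · exact Finset.Icc_subset_Icc le_rfl (by omega)
      · intro i hi _
        exact hC i (Finset.mem_Icc.mpr ⟨(Finset.mem_Icc.mp hi).1,
          le_trans (Finset.mem_Icc.mp hi).2 hkm⟩)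
  -- Step B
  have hB := tele_bound n m p s hs0 hp hsn hmono m le_rfl
  set M : ℝ := (Finset.Icc 1 m).sup' (Finset.nonempty_Icc.mpr hm) (fun k => p (s k)) with hM
  set G : ℝ := ∑ k ∈ Finset.Icc 1 m,
      ∑ j ∈ Finset.Icc (s (k - 1) + 1) (s k - 1), p j with hG
  have hMk : ∀ k ∈ Finset.Icc 1 m, p (s k) ≤ M := fun k hk =>
    Finset.le_sup' (fun k => p (s k)) hk
  have hBd : ∑ k ∈ Finset.Icc 1 m,
      ((∑ j ∈ Finset.Icc (s (k-1)+1) (s k - 1), p j) + p (s k)) ≤ G + m * M := by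
    rw [Finset.sum_add_distrib, hG]
    gcongr
    calc ∑ k ∈ Finset.Icc 1 m, p (s k) ≤ ∑ k ∈ Finset.Icc 1 m, M :=
          Finset.sum_le_sum hMk
      _ = m * M := by
          rw [Finset.sum_const, Nat.card_Icc]
          simp [nsmul_eq_mul]
  have hOle : OPT ≤ G + m * M := le_trans hA (le_trans hB hBd)
  have hM0 : 0 ≤ M := le_trans (hp (s m) (hsn m hmm)) (hMk m hmm)
  set X : ℝ := max M G with hX
  have hMX : M ≤ X := le_max_left _ _
  have hGX : G ≤ X := le_max_right _ _
  rw [div_le_iff₀ (by positivity)]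
  have hmMX : (m : ℝ) * M ≤ (m : ℝ) * X :=
    mul_le_mul_of_nonneg_left hMX (by positivity)
  calc OPT ≤ G + m * M := hOle
    _ ≤ X + m * X := add_le_add hGX hmMX
    _ = X * (m + 1) := by ring
end

section
/- Assume the items are indexed so that p_1/w_1 ≥ … ≥ p_n/w_n and Σ_{j=1}^n w_j > Σ_{i=1}^m C_i; set s_0 = 0 and for k = 1,…,m let s_k = min{ j : Σ_{l=1}^j w_l > Σ_{i=1}^k C_i } be the critical item relative to knapsack k. Let L = max{ p_{s_1}, …, p_{s_m}, Σ_{k=1}^m Σ_{j=s_{k−1}+1}^{s_k−1} p_j } and let j* ∈ {s_1,…,s_m} be a critical item with maximal profit p_{j*}. If OPT_LP(C,w,p) > 0 then p_{j*} / OPT_LP(C,w,p) ≥ min{ 1/(m+1), (1/m)·(1 − L / OPT_LP(C,w,p)) }. -/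
/-- Relation between the profit of the most profitable critical item `j*` and the
gap between the greedy lower bound `L` and the LP optimum:
`p j* / OPT ≥ min ( 1/(m+1) , (1/m)·(1 − L/OPT) )`. -/
theorem best_critical_item_profit_bound
    (n m : ℕ) (hm : 1 ≤ m)
    (w p : ℕ → ℝ)
    (hw : ∀ j ∈ Finset.Icc 1 n, 0 < w j)
    (hp : ∀ j ∈ Finset.Icc 1 n, 0 ≤ p j)
    (C : ℕ → ℝ) (hC : ∀ i ∈ Finset.Icc 1 m, 0 ≤ C i)
    (hsorted : ∀ j ∈ Finset.Icc 1 n, ∀ k ∈ Finset.Icc 1 n, j ≤ k →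
      p k / w k ≤ p j / w j)
    (hsum : ∑ i ∈ Finset.Icc 1 m, C i < ∑ j ∈ Finset.Icc 1 n, w j)
    (s : ℕ → ℕ) (hs0 : s 0 = 0)
    (hs : ∀ k ∈ Finset.Icc 1 m,
      IsLeast {j | j ∈ Finset.Icc 1 n ∧
        (∑ i ∈ Finset.Icc 1 k, C i) < ∑ l ∈ Finset.Icc 1 j, w l} (s k))
    (OPT : ℝ)
    (hOPT : IsGreatest {v : ℝ | ∃ x : ℕ → ℕ → ℝ,
      ((∀ j ∈ Finset.Icc 1 n, ∀ i ∈ Finset.Icc 1 m, 0 ≤ x j i) ∧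
       (∀ i ∈ Finset.Icc 1 m, ∑ j ∈ Finset.Icc 1 n, w j * x j i ≤ C i) ∧
       (∀ j ∈ Finset.Icc 1 n, ∑ i ∈ Finset.Icc 1 m, x j i ≤ 1)) ∧
      ∑ j ∈ Finset.Icc 1 n, ∑ i ∈ Finset.Icc 1 m, p j * x j i = v} OPT)
    (L : ℝ)
    (hL : L = max ((Finset.Icc 1 m).sup' (Finset.nonempty_Icc.mpr hm) (fun k => p (s k)))
          (∑ k ∈ Finset.Icc 1 m,
            ∑ j ∈ Finset.Icc (s (k - 1) + 1) (s k - 1), p j))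
    (jstar : ℕ)
    (hjstar : ∃ k ∈ Finset.Icc 1 m, jstar = s k)
    (hjstar_max : ∀ k ∈ Finset.Icc 1 m, p (s k) ≤ p jstar)
    (hOPTpos : 0 < OPT) :
    min (1 / ((m : ℝ) + 1)) ((1 / (m : ℝ)) * (1 - L / OPT)) ≤ p jstar / OPT := by
  classical
  -- interval conversion
  have icc_eq : ∀ k : ℕ, Finset.Icc 1 k = Finset.Ioc 0 k := fun k => Finset.Icc_add_one_left_eq_Ioc 0 k
  -- extract optimal solution
  obtain ⟨⟨x, ⟨hx0, hxC, hx1⟩, hxv⟩, -⟩ := hOPT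
  set y : ℕ → ℝ := fun j => ∑ i ∈ Finset.Icc 1 m, x j i with hy
  have hy0 : ∀ j ∈ Finset.Icc 1 n, 0 ≤ y j := fun j hj =>
    Finset.sum_nonneg (fun i hi => hx0 j hj i hi)
  have hy1 : ∀ j ∈ Finset.Icc 1 n, y j ≤ 1 := hx1
  have hOPTeq : OPT = ∑ j ∈ Finset.Icc 1 n, p j * y j := by
    rw [← hxv]
    exact Finset.sum_congr rfl fun j _ => (Finset.mul_sum _ _ _).symm
  have hwy : ∑ j ∈ Finset.Icc 1 n, w j * y j ≤ ∑ i ∈ Finset.Icc 1 m, C i := by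
    have e1 : ∑ j ∈ Finset.Icc 1 n, w j * y j
        = ∑ j ∈ Finset.Icc 1 n, ∑ i ∈ Finset.Icc 1 m, w j * x j i :=
      Finset.sum_congr rfl fun j _ => Finset.mul_sum _ _ _
    rw [e1, Finset.sum_comm]
    exact Finset.sum_le_sum hxC
  -- the critical item for the total capacity
  have hm_mem : m ∈ Finset.Icc 1 m := Finset.mem_Icc.mpr ⟨hm, le_rfl⟩
  obtain ⟨⟨htmem, htgt⟩, -⟩ := hs m hm_mem
  have ht1 : 1 ≤ s m := (Finset.mem_Icc.mp htmem).1
  have htn : s m ≤ n := (Finset.mem_Icc.mp htmem).2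
  have hwt : 0 < w (s m) := hw _ htmem
  set ρ : ℝ := p (s m) / w (s m) with hρdef
  have hρ : 0 ≤ ρ := div_nonneg (hp _ htmem) hwt.le
  -- Lemma A : the LP value is at most the sum of profits of items up to s m
  have keyA : ∑ j ∈ Finset.Ioc 0 n, p j * y j ≤ ∑ j ∈ Finset.Ioc 0 (s m), p j := by
    have hsplit : ∀ F : ℕ → ℝ, ∑ j ∈ Finset.Ioc 0 (s m), F j + ∑ j ∈ Finset.Ioc (s m) n, F j
        = ∑ j ∈ Finset.Ioc 0 n, F j := fun F =>
      Finset.sum_Ioc_consecutive F (Nat.zero_le _) htn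
    have b1 : ∀ j ∈ Finset.Ioc 0 (s m),
        p j * y j ≤ p j - ρ * w j + ρ * (w j * y j) := by
      intro j hj
      obtain ⟨hj0, hjt⟩ := Finset.mem_Ioc.mp hj
      have hj' : j ∈ Finset.Icc 1 n := Finset.mem_Icc.mpr ⟨hj0, le_trans hjt htn⟩
      have hwj := hw j hj'
      have hso := hsorted j hj' (s m) htmem hjt
      have hpw : ρ * w j ≤ p j := by
        rw [hρdef, div_mul_eq_mul_div, div_le_iff₀ hwt]
        exact (div_le_div_iff₀ hwt hwj).mp hso
      nlinarith [mul_nonneg (sub_nonneg.mpr hpw) (sub_nonneg.mpr (hy1 j hj'))]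
    have b2 : ∀ j ∈ Finset.Ioc (s m) n, p j * y j ≤ ρ * (w j * y j) := by
      intro j hj
      obtain ⟨hjt, hjn⟩ := Finset.mem_Ioc.mp hj
      have hj' : j ∈ Finset.Icc 1 n := Finset.mem_Icc.mpr ⟨le_trans ht1 hjt.le, hjn⟩
      have hwj := hw j hj'
      have hso := hsorted (s m) htmem j hj' hjt.le
      have hpw : p j ≤ ρ * w j := by
        rw [hρdef, div_mul_eq_mul_div, le_div_iff₀ hwt]
        exact (div_le_div_iff₀ hwj hwt).mp hso
      have := mul_le_mul_of_nonneg_right hpw (hy0 j hj')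
      nlinarith
    have hCineq : ∑ j ∈ Finset.Ioc 0 n, w j * y j < ∑ j ∈ Finset.Ioc 0 (s m), w j := by
      rw [← icc_eq, ← icc_eq]
      exact lt_of_le_of_lt hwy htgt
    calc ∑ j ∈ Finset.Ioc 0 n, p j * y j
        = ∑ j ∈ Finset.Ioc 0 (s m), p j * y j + ∑ j ∈ Finset.Ioc (s m) n, p j * y j :=
          (hsplit _).symm
      _ ≤ ∑ j ∈ Finset.Ioc 0 (s m), (p j - ρ * w j + ρ * (w j * y j))
            + ∑ j ∈ Finset.Ioc (s m) n, ρ * (w j * y j) :=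
          add_le_add (Finset.sum_le_sum b1) (Finset.sum_le_sum b2)
      _ = ∑ j ∈ Finset.Ioc 0 (s m), p j - ρ * ∑ j ∈ Finset.Ioc 0 (s m), w j
            + ρ * (∑ j ∈ Finset.Ioc 0 (s m), w j * y j + ∑ j ∈ Finset.Ioc (s m) n, w j * y j) := by
          rw [Finset.sum_add_distrib, Finset.sum_sub_distrib, ← Finset.mul_sum,
            ← Finset.mul_sum, ← Finset.mul_sum]
          ring
      _ = ∑ j ∈ Finset.Ioc 0 (s m), p j
            - ρ * (∑ j ∈ Finset.Ioc 0 (s m), w j - ∑ j ∈ Finset.Ioc 0 n, w j * y j) := by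
          rw [hsplit fun j => w j * y j]; ring
      _ ≤ ∑ j ∈ Finset.Ioc 0 (s m), p j := by
          nlinarith [mul_nonneg hρ (sub_nonneg.mpr hCineq.le)]
  -- monotonicity of s
  have mono : ∀ k, k < m → s k ≤ s (k + 1) := by
    intro k hk
    rcases Nat.eq_zero_or_pos k with rfl | hk1
    · rw [hs0]; exact Nat.zero_le _
    · have hk_mem : k ∈ Finset.Icc 1 m := Finset.mem_Icc.mpr ⟨hk1, hk.le⟩
      have hk1_mem : k + 1 ∈ Finset.Icc 1 m := Finset.mem_Icc.mpr ⟨Nat.le_add_left 1 k, hk⟩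
      obtain ⟨⟨hmem', hgt'⟩, -⟩ := hs (k + 1) hk1_mem
      refine (hs k hk_mem).2 ⟨hmem', ?_⟩
      have hCle : ∑ i ∈ Finset.Icc 1 k, C i ≤ ∑ i ∈ Finset.Icc 1 (k + 1), C i := by
        rw [Finset.sum_Icc_succ_top (Nat.le_add_left 1 k)]
        have := hC (k + 1) hk1_mem
        linarith
      exact lt_of_le_of_lt hCle hgt'
  -- telescoping
  have T : ∀ K, K ≤ m → ∑ j ∈ Finset.Ioc 0 (s K), p j
      = ∑ k ∈ Finset.Ioc 0 K, ∑ j ∈ Finset.Ioc (s (k - 1)) (s k), p j := by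
    intro K
    induction K with
    | zero => intro _; simp [hs0]
    | succ K ih =>
      intro hK
      rw [Finset.sum_Ioc_succ_top (Nat.zero_le K), ← ih (Nat.le_of_succ_le hK),
        Nat.add_sub_cancel]
      exact (Finset.sum_Ioc_consecutive p (Nat.zero_le _) (mono K hK)).symm
  -- Lemma B
  have keyB : ∑ j ∈ Finset.Ioc 0 (s m), p j ≤ L + (m : ℝ) * p jstar := by
    rw [T m le_rfl]
    have step : ∀ k ∈ Finset.Ioc 0 m,
        ∑ j ∈ Finset.Ioc (s (k - 1)) (s k), p j
          ≤ (∑ j ∈ Finset.Ioc (s (k - 1)) (s k - 1), p j) + p (s k) := by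
      intro k hk
      obtain ⟨hk0, hkm⟩ := Finset.mem_Ioc.mp hk
      have hk_mem : k ∈ Finset.Icc 1 m := Finset.mem_Icc.mpr ⟨hk0, hkm⟩
      have hskmem := (hs k hk_mem).1.1
      have hpsk : 0 ≤ p (s k) := hp _ hskmem
      have hab : s (k - 1) ≤ s k := by
        have h1 : k - 1 < m := lt_of_lt_of_le (Nat.sub_lt hk0 one_pos) hkm
        have := mono (k - 1) h1
        rwa [Nat.sub_add_cancel hk0] at this
      rcases eq_or_lt_of_le hab with heq | hlt
      · rw [heq, Finset.Ioc_self, Finset.sum_empty,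
          Finset.Ioc_eq_empty (by omega : ¬ s k < s k - 1), Finset.sum_empty]
        linarith
      · have hb1 : 1 ≤ s k := lt_of_le_of_lt (Nat.zero_le _) hlt
        have := Finset.sum_Ioc_succ_top (Nat.le_sub_one_of_lt hlt) p
        rw [Nat.sub_add_cancel hb1] at this
        rw [this]
    calc ∑ k ∈ Finset.Ioc 0 m, ∑ j ∈ Finset.Ioc (s (k - 1)) (s k), p j
        ≤ ∑ k ∈ Finset.Ioc 0 m,
            ((∑ j ∈ Finset.Ioc (s (k - 1)) (s k - 1), p j) + p (s k)) :=
          Finset.sum_le_sum step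
      _ = ∑ k ∈ Finset.Ioc 0 m, ∑ j ∈ Finset.Ioc (s (k - 1)) (s k - 1), p j
            + ∑ k ∈ Finset.Ioc 0 m, p (s k) := Finset.sum_add_distrib
      _ ≤ L + (m : ℝ) * p jstar := by
          have h2 : ∑ k ∈ Finset.Ioc 0 m, ∑ j ∈ Finset.Ioc (s (k - 1)) (s k - 1), p j ≤ L := by
            rw [hL]
            refine le_trans (le_of_eq ?_) (le_max_right _ _)
            rw [icc_eq]
            exact Finset.sum_congr rfl fun k _ => by
              rw [← Finset.Icc_add_one_left_eq_Ioc]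
          have h3 : ∑ k ∈ Finset.Ioc 0 m, p (s k) ≤ (m : ℝ) * p jstar := by
            calc ∑ k ∈ Finset.Ioc 0 m, p (s k)
                ≤ ∑ _k ∈ Finset.Ioc 0 m, p jstar :=
                  Finset.sum_le_sum fun k hk => hjstar_max k (by rwa [icc_eq])
              _ = (m : ℝ) * p jstar := by
                  rw [Finset.sum_const, Nat.card_Ioc, Nat.sub_zero, nsmul_eq_mul]
          linarith
  -- combine
  have hfinal : OPT ≤ L + (m : ℝ) * p jstar := by
    calc OPT = ∑ j ∈ Finset.Ioc 0 n, p j * y j := by rw [hOPTeq, icc_eq]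
      _ ≤ ∑ j ∈ Finset.Ioc 0 (s m), p j := keyA
      _ ≤ L + (m : ℝ) * p jstar := keyB
  refine le_trans (min_le_right _ _) ?_
  have hm0 : (0 : ℝ) < (m : ℝ) := by exact_mod_cast Nat.lt_of_lt_of_le Nat.zero_lt_one hm
  have e : (1 / (m : ℝ)) * (1 - L / OPT) = (OPT - L) / ((m : ℝ) * OPT) := by
    field_simp
  rw [e, div_le_div_iff₀ (by positivity) hOPTpos]
  nlinarith [mul_le_mul_of_nonneg_right (show OPT - L ≤ (m : ℝ) * p jstar by linarith) hOPTpos.le]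
end

section
/- In the single-knapsack setting with items indexed 1,…,n, weights w_j > 0 and capacity C ≥ 0, define the critical item of a ground set A ⊆ {1,…,n} with respect to capacity C' as min{ j ∈ A : Σ_{l∈A, l≤j} w_l > C' }. Let j* be the critical item of {1,…,n} with respect to C, and assume w_{j*} ≤ C and Σ_{l≠j*} w_l > C. Let j_1 be the critical item of {1,…,n}∖{j*} with respect to C − w_{j*}, and let j_2 be the critical item of {1,…,n}∖{j*} with respect to C. Then j_1 and j_2 exist and j_1 < j* < j_2. -/
/-- `j` is the critical item of the ground set `A` with respect to capacity `C'`: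
the least index in `A` such that the total weight of the items of `A` with index
at most `j` exceeds `C'`. -/
def IsCriticalItem (w : ℕ → ℝ) (A : Finset ℕ) (C' : ℝ) (j : ℕ) : Prop :=
  IsLeast {j' | j' ∈ A ∧ C' < ∑ l ∈ A.filter (· ≤ j'), w l} j

/-- Branching on the critical item `j*` of a single knapsack: in the inclusion
branch (ground set `{1,…,n} \ {j*}`, capacity `C − w j*`) and in the exclusion
branch (same ground set, capacity `C`) the critical items `j₁`, `j₂` exist and
satisfy `j₁ < j* < j₂`. -/
theorem critical_item_branching
    (n : ℕ) (w : ℕ → ℝ) (hw : ∀ j ∈ Finset.Icc 1 n, 0 < w j)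
    (C : ℝ) (hC : 0 ≤ C)
    (jstar : ℕ)
    (hjstar : IsCriticalItem w (Finset.Icc 1 n) C jstar)
    (hfit : w jstar ≤ C)
    (hrest : C < ∑ l ∈ (Finset.Icc 1 n).erase jstar, w l) :
    ∃ j₁ j₂ : ℕ,
      IsCriticalItem w ((Finset.Icc 1 n).erase jstar) (C - w jstar) j₁ ∧
      IsCriticalItem w ((Finset.Icc 1 n).erase jstar) C j₂ ∧
      j₁ < jstar ∧ jstar < j₂ := by
  classical
  obtain ⟨⟨hjA, hjS⟩, hjmin⟩ := hjstar
  set A := Finset.Icc 1 n with hA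
  set B := A.erase jstar with hB
  have hCw : 0 ≤ C - w jstar := by linarith
  -- for j < jstar, the sums over B and A agree
  have hsum : ∀ j, j < jstar →
      ∑ l ∈ B.filter (· ≤ j), w l = ∑ l ∈ A.filter (· ≤ j), w l := by
    intro j hj
    congr 1
    rw [hB, Finset.filter_erase, Finset.erase_eq_of_notMem]
    simp only [Finset.mem_filter, not_and]
    intro _ h
    omega
  -- split S(jstar)
  have hfilter_eq : A.filter (· ≤ jstar) = insert jstar (A.filter (· < jstar)) := by
    ext x
    simp only [Finset.mem_filter, Finset.mem_insert]
    constructor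
    · rintro ⟨hx, hle⟩
      rcases lt_or_eq_of_le hle with h | h
      · exact Or.inr ⟨hx, h⟩
      · exact Or.inl h
    · rintro (rfl | ⟨hx, h⟩)
      · exact ⟨hjA, le_refl _⟩
      · exact ⟨hx, le_of_lt h⟩
  have hsplit : ∑ l ∈ A.filter (· ≤ jstar), w l
      = w jstar + ∑ l ∈ A.filter (· < jstar), w l := by
    rw [hfilter_eq, Finset.sum_insert (by simp)]
  have hlt : C - w jstar < ∑ l ∈ A.filter (· < jstar), w l := by
    rw [hsplit] at hjS; linarith
  have hne : (A.filter (· < jstar)).Nonempty := by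
    by_contra h
    rw [Finset.not_nonempty_iff_eq_empty] at h
    rw [h, Finset.sum_empty] at hlt
    linarith
  set m := (A.filter (· < jstar)).max' hne with hm
  have hmmem := Finset.max'_mem _ hne
  rw [Finset.mem_filter] at hmmem
  obtain ⟨hmA, hmlt⟩ := hmmem
  have hfilter_m : A.filter (· ≤ m) = A.filter (· < jstar) := by
    ext x
    simp only [Finset.mem_filter]
    constructor
    · rintro ⟨hx, hle⟩
      exact ⟨hx, lt_of_le_of_lt hle hmlt⟩
    · rintro ⟨hx, hltx⟩
      exact ⟨hx, Finset.le_max' (A.filter (· < jstar)) x (Finset.mem_filter.mpr ⟨hx, hltx⟩)⟩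
  have hmB : m ∈ B := Finset.mem_erase.mpr ⟨Nat.ne_of_lt hmlt, hmA⟩
  have hmS : C - w jstar < ∑ l ∈ B.filter (· ≤ m), w l := by
    rw [hsum m hmlt, hfilter_m]; exact hlt
  -- the inclusion-branch candidate set
  set S1 : Set ℕ := {j' | j' ∈ B ∧ C - w jstar < ∑ l ∈ B.filter (· ≤ j'), w l} with hS1
  have hS1ne : S1.Nonempty := ⟨m, hmB, hmS⟩
  -- the exclusion-branch candidate set
  have hBne : B.Nonempty := by
    by_contra h
    rw [Finset.not_nonempty_iff_eq_empty] at h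
    rw [h, Finset.sum_empty] at hrest
    linarith
  set M := B.max' hBne with hM
  have hMmem := Finset.max'_mem _ hBne
  have hfilter_M : B.filter (· ≤ M) = B := by
    apply Finset.filter_true_of_mem
    intro x hx
    exact Finset.le_max' _ _ hx
  have hMS : C < ∑ l ∈ B.filter (· ≤ M), w l := by rw [hfilter_M]; exact hrest
  set S2 : Set ℕ := {j' | j' ∈ B ∧ C < ∑ l ∈ B.filter (· ≤ j'), w l} with hS2
  have hS2ne : S2.Nonempty := ⟨M, hMmem, hMS⟩
  refine ⟨sInf S1, sInf S2, ⟨Nat.sInf_mem hS1ne, fun b hb => Nat.sInf_le hb⟩,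
    ⟨Nat.sInf_mem hS2ne, fun b hb => Nat.sInf_le hb⟩, ?_, ?_⟩
  · exact lt_of_le_of_lt (Nat.sInf_le ⟨hmB, hmS⟩) hmlt
  · obtain ⟨hj2B, hj2S⟩ := Nat.sInf_mem hS2ne
    have hne' : sInf S2 ≠ jstar := (Finset.mem_erase.mp hj2B).1
    rcases lt_trichotomy jstar (sInf S2) with h | h | h
    · exact h
    · exact absurd h.symm hne'
    · exfalso
      rw [hsum _ h] at hj2S
      have := hjmin ⟨(Finset.mem_erase.mp hj2B).2, hj2S⟩
      omega
end

section
/- Let m ≥ 1 and let p'_1 ≥ p'_2 ≥ … ≥ p'_n > 0 be reals, let 1 ≤ k ≤ n, and let LB, UB be reals with LB ≥ (1/m) · Σ_{j=1}^n p'_j and UB ≤ LB + m · p'_k. Then UB / LB ≤ 1 + m² / k. -/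
/-- If `LB ≥ (1/m)·Σ p'_j` for nonincreasing positive `p'_1 ≥ … ≥ p'_n` and
`UB ≤ LB + m·p'_k`, then `UB / LB ≤ 1 + m²/k`. -/
theorem ub_lb_ratio_bound
    (m n k : ℕ) (hm : 1 ≤ m) (hk1 : 1 ≤ k) (hkn : k ≤ n)
    (p' : Fin n → ℝ) (hpos : ∀ j, 0 < p' j)
    (hsorted : ∀ j l : Fin n, j ≤ l → p' l ≤ p' j)
    (LB UB : ℝ)
    (hLB : (1 / (m : ℝ)) * ∑ j, p' j ≤ LB)
    (hUB : UB ≤ LB + (m : ℝ) * p' ⟨k - 1, by omega⟩) :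
    UB / LB ≤ 1 + (m : ℝ) ^ 2 / (k : ℝ) := by
  set q := p' ⟨k - 1, by omega⟩ with hq
  have hm0 : (0 : ℝ) < m := by positivity
  have hk0 : (0 : ℝ) < k := by positivity
  set s := Finset.univ.filter (fun j : Fin n => (j : ℕ) < k) with hs
  have hcard : s.card = k := by
    rw [hs, Finset.card_filter]
    rw [Fin.sum_univ_eq_sum_range (fun i => if i < k then 1 else 0)]
    rw [← Finset.sum_filter]
    have : Finset.filter (fun i => i < k) (Finset.range n) = Finset.range k := by
      ext i; simp; omega
    simp [this]
  have hsum : (k : ℝ) * q ≤ ∑ j, p' j := by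
    calc (k : ℝ) * q = ∑ _j ∈ s, q := by rw [Finset.sum_const, nsmul_eq_mul, hcard]
    _ ≤ ∑ j ∈ s, p' j := by
        apply Finset.sum_le_sum
        intro j hj
        simp only [hs, Finset.mem_filter] at hj
        exact hsorted j ⟨k - 1, by omega⟩ (by simp [Fin.le_def]; omega)
    _ ≤ ∑ j, p' j := Finset.sum_le_sum_of_subset_of_nonneg (Finset.subset_univ s)
        (fun j _ _ => (hpos j).le)
  have hq0 : 0 < q := hpos _
  have hLB0 : 0 < LB := by
    have hsum0 : 0 < (1 / (m : ℝ)) * ∑ j, p' j := by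
      apply mul_pos (by positivity)
      apply Finset.sum_pos (fun j _ => hpos j)
      exact Finset.univ_nonempty_iff.mpr ⟨⟨0, by omega⟩⟩
    linarith
  have hmq : (m : ℝ) * q ≤ (m : ℝ) ^ 2 / k * LB := by
    have h1 : (k : ℝ) / m * q ≤ LB := by
      calc (k : ℝ) / m * q = (1 / m) * ((k : ℝ) * q) := by ring
      _ ≤ (1 / m) * ∑ j, p' j := by
          apply mul_le_mul_of_nonneg_left hsum (by positivity)
      _ ≤ LB := hLB
    calc (m : ℝ) * q = (m : ℝ) ^ 2 / k * ((k : ℝ) / m * q) := by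
          field_simp
    _ ≤ (m : ℝ) ^ 2 / k * LB := by
          apply mul_le_mul_of_nonneg_left h1 (by positivity)
  rw [div_le_iff₀ hLB0]
  calc UB ≤ LB + (m : ℝ) * q := hUB
  _ ≤ LB + (m : ℝ) ^ 2 / k * LB := by linarith
  _ = (1 + (m : ℝ) ^ 2 / k) * LB := by ring
end
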